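/- Long exact sequence: Let F be a functor from the category BanAlg of Banach algebras and continuous homomorphisms into an abelian category, and assume F is homotopy invariant and half-exact for semi-split extensions. Then for every semi-split extension B ↣^i D ↠^π A of Banach algebras, the sequence F(ΣB) →^{F(Σi)} F(ΣD) →^{F(Σπ)} F(ΣA) →^{∂} F(B) →^{F(i)} F(D) →^{F(π)} F(A) is exact, where the connecting morphism ∂ is F(κ_π)⁻¹ ∘ F(ι(π)) (here F(κ_π) : F(B) → F(C_π) is an isomorphism, ι(π) : ΣA → C_π, f ↦ (f, 0), and κ_π : B → C_π, b ↦ (0, i(b))). -/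

import Mathlib

set_option linter.unusedSectionVars false
noncomputable section
open scoped unitInterval

section Vanish
variable (X : Type) [TopologicalSpace X] (A : Type) [NonUnitalNormedRing A] [NormedSpace ℂ A]
  [IsScalarTower ℂ A A] [SMulCommClass ℂ A A]

/-- The subalgebra of continuous functions vanishing on `Y`. -/
def vanishAlg (Y : Set X) : NonUnitalSubalgebra ℂ C(X, A) where
  carrier := {f | ∀ y ∈ Y, f y = 0}
  add_mem' hf hg y hy := by simp [hf y hy, hg y hy]
  zero_mem' y hy := rfl
  mul_mem' hf hg y hy := by simp [hg y hy]
  smul_mem' c f hf y hy := by simp [hf y hy]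

variable {X A}

@[simp] lemma mem_vanishAlg {Y : Set X} {f : C(X, A)} :
    f ∈ vanishAlg X A Y ↔ ∀ y ∈ Y, f y = 0 := Iff.rfl

lemma isClosed_vanishAlg (Y : Set X) : IsClosed ((vanishAlg X A Y : Set C(X, A))) := by
  have : (vanishAlg X A Y : Set C(X, A)) = ⋂ y ∈ Y, {f : C(X, A) | f y = 0} := by
    ext f; simp [Set.mem_iInter]
  rw [this]
  exact isClosed_biInter fun y _ =>
    isClosed_eq (continuous_eval_const y) continuous_const

end Vanish

section Susp
variable (A : Type) [NonUnitalNormedRing A] [NormedSpace ℂ A] [IsScalarTower ℂ A A] [SMulCommClass ℂ A A]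

/-- `ΣA`, the suspension of `A`: continuous functions on `[0,1]` vanishing at both endpoints. -/
def suspAlg : NonUnitalSubalgebra ℂ C(unitInterval, A) := vanishAlg unitInterval A {0, 1}

variable {A} {B : Type} [NonUnitalNormedRing B] [NormedSpace ℂ B] [IsScalarTower ℂ B B] [SMulCommClass ℂ B B]

lemma susp_apply_zero (f : suspAlg A) : f.1 0 = 0 := f.2 0 (Set.mem_insert _ _)
lemma susp_apply_one (f : suspAlg A) : f.1 1 = 0 := f.2 1 (Set.mem_insert_of_mem _ rfl)

/-- Postcomposition with a continuous homomorphism. -/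
def postcompHom (φ : A →ₙₐ[ℂ] B) (hφ : Continuous φ) :
    C(unitInterval, A) →ₙₐ[ℂ] C(unitInterval, B) where
  toFun f := (⟨⇑φ, hφ⟩ : C(A, B)).comp f
  map_smul' c f := by ext t; simp
  map_zero' := by ext t; simp
  map_add' f g := by ext t; simp
  map_mul' f g := by ext t; simp

@[simp] lemma postcompHom_apply (φ : A →ₙₐ[ℂ] B) (hφ : Continuous φ) (f : C(unitInterval, A))
    (t : unitInterval) : postcompHom φ hφ f t = φ (f t) := rfl

/-- `Σφ`, the suspension of a continuous homomorphism `φ`. -/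
def suspMap (φ : A →ₙₐ[ℂ] B) (hφ : Continuous φ) : suspAlg A →ₙₐ[ℂ] suspAlg B where
  toFun f := ⟨postcompHom φ hφ f.1, by
    rintro y (rfl | rfl)
    · simp [susp_apply_zero f]
    · simp [susp_apply_one f]⟩
  map_smul' c f := by apply Subtype.ext; exact map_smul (postcompHom φ hφ) c f.1
  map_zero' := by apply Subtype.ext; exact map_zero (postcompHom φ hφ)
  map_add' f g := by apply Subtype.ext; exact map_add (postcompHom φ hφ) f.1 g.1
  map_mul' f g := by apply Subtype.ext; exact map_mul (postcompHom φ hφ) f.1 g.1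

@[simp] lemma suspMap_apply (φ : A →ₙₐ[ℂ] B) (hφ : Continuous φ) (f : suspAlg A) (t : unitInterval) :
    ((suspMap φ hφ f : suspAlg B) : C(unitInterval, B)) t = φ (f.1 t) := rfl

lemma continuous_suspMap (φ : A →ₙₐ[ℂ] B) (hφ : Continuous φ) : Continuous (suspMap φ hφ) := by
  apply Continuous.subtype_mk
  exact (ContinuousMap.continuous_postcomp _).comp continuous_subtype_val

end Susp

section MappingCone
variable {D A : Type}
  [NonUnitalNormedRing D] [NormedSpace ℂ D] [IsScalarTower ℂ D D] [SMulCommClass ℂ D D]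
  [NonUnitalNormedRing A] [NormedSpace ℂ A] [IsScalarTower ℂ A A] [SMulCommClass ℂ A A]

/-- The mapping cone `C_π = {(c, d) ∈ CA × D : c(1) = 0, c(0) = π(d)}` of `π : D → A`,
as a closed subalgebra of `C([0,1], A) × D` (with the maximum norm). -/
def mappingCone (π : D →ₙₐ[ℂ] A) : NonUnitalSubalgebra ℂ (C(unitInterval, A) × D) where
  carrier := {p | p.1 1 = 0 ∧ p.1 0 = π p.2}
  add_mem' := by
    rintro p q ⟨hp1, hp0⟩ ⟨hq1, hq0⟩
    exact ⟨by simp [hp1, hq1], by simp [hp0, hq0]⟩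
  zero_mem' := ⟨rfl, by simp⟩
  mul_mem' := by
    rintro p q ⟨hp1, hp0⟩ ⟨hq1, hq0⟩
    exact ⟨by simp [hp1, hq1], by simp [hp0, hq0]⟩
  smul_mem' := by
    rintro c p ⟨hp1, hp0⟩
    exact ⟨by simp [hp1], by simp [hp0]⟩

@[simp] lemma mem_mappingCone {π : D →ₙₐ[ℂ] A} {p : C(unitInterval, A) × D} :
    p ∈ mappingCone π ↔ p.1 1 = 0 ∧ p.1 0 = π p.2 := Iff.rfl

lemma isClosed_mappingCone (π : D →ₙₐ[ℂ] A) (hπ : Continuous π) :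
    IsClosed ((mappingCone π : Set (C(unitInterval, A) × D))) := by
  have h1 : IsClosed {p : C(unitInterval, A) × D | p.1 1 = 0} :=
    isClosed_eq ((continuous_eval_const 1).comp continuous_fst) continuous_const
  have h2 : IsClosed {p : C(unitInterval, A) × D | p.1 0 = π p.2} :=
    isClosed_eq ((continuous_eval_const 0).comp continuous_fst)
      (hπ.comp continuous_snd)
  exact h1.inter h2

/-- The canonical epimorphism `ε(π) : C_π → D, (c, d) ↦ d`. -/
def coneEps (π : D →ₙₐ[ℂ] A) : mappingCone π →ₙₐ[ℂ] D where
  toFun p := p.1.2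
  map_smul' _ _ := rfl
  map_zero' := rfl
  map_add' _ _ := rfl
  map_mul' _ _ := rfl

lemma continuous_coneEps (π : D →ₙₐ[ℂ] A) : Continuous (coneEps π) :=
  continuous_snd.comp continuous_subtype_val

/-- The canonical inclusion `ι(π) : ΣA → C_π, f ↦ (f, 0)`. -/
def coneIota (π : D →ₙₐ[ℂ] A) : suspAlg A →ₙₐ[ℂ] mappingCone π where
  toFun f := ⟨(f.1, 0), ⟨susp_apply_one f, by simp [susp_apply_zero f]⟩⟩
  map_smul' c f := by apply Subtype.ext; exact Prod.ext (by rfl) (by simp)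
  map_zero' := by apply Subtype.ext; exact Prod.ext (by rfl) (by simp)
  map_add' f g := by apply Subtype.ext; exact Prod.ext (by rfl) (by simp)
  map_mul' f g := by apply Subtype.ext; exact Prod.ext (by rfl) (by simp)

lemma continuous_coneIota (π : D →ₙₐ[ℂ] A) : Continuous (coneIota π) := by
  apply Continuous.subtype_mk
  exact (continuous_subtype_val).prodMk continuous_const

end MappingCone

section Homotopy
/-- Two continuous homomorphisms `φ, ψ : A → B` are homotopic if there is a continuous
homomorphism `H : A → C([0,1], B)` with `ev₀ ∘ H = φ` and `ev₁ ∘ H = ψ`. -/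
def NAlgHomotopic {A B : Type} [NonUnitalNonAssocSemiring A] [Module ℂ A] [TopologicalSpace A]
    [NonUnitalNonAssocSemiring B] [Module ℂ B] [TopologicalSpace B] [IsTopologicalSemiring B]
    [ContinuousConstSMul ℂ B] (φ ψ : A →ₙₐ[ℂ] B) : Prop :=
  ∃ H : A →ₙₐ[ℂ] C(unitInterval, B),
    Continuous H ∧ (∀ a, H a 0 = φ a) ∧ (∀ a, H a 1 = ψ a)
end Homotopy

open CategoryTheory

/-- A bundled (possibly non-unital, possibly degenerate) complex Banach algebra. -/
structure BanAlg : Type 1 where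
  carrier : Type
  [nonUnitalNormedRing : NonUnitalNormedRing carrier]
  [normedSpace : NormedSpace ℂ carrier]
  [isScalarTower : IsScalarTower ℂ carrier carrier]
  [smulCommClass : SMulCommClass ℂ carrier carrier]
  [completeSpace : CompleteSpace carrier]

namespace BanAlg

attribute [instance] nonUnitalNormedRing normedSpace isScalarTower smulCommClass completeSpace

instance : CoeSort BanAlg Type := ⟨carrier⟩

/-- Build a bundled Banach algebra from an unbundled one. -/
def of (A : Type) [NonUnitalNormedRing A] [NormedSpace ℂ A] [IsScalarTower ℂ A A]
    [SMulCommClass ℂ A A] [CompleteSpace A] : BanAlg := ⟨A⟩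

/-- The category `BanAlg` of Banach algebras and continuous algebra homomorphisms. -/
instance : Category BanAlg where
  Hom A B := {f : A →ₙₐ[ℂ] B // Continuous f}
  id A := ⟨NonUnitalAlgHom.id ℂ A, continuous_id⟩
  comp f g := ⟨g.1.comp f.1, g.2.comp f.2⟩
  id_comp f := Subtype.ext (by ext x; rfl)
  comp_id f := Subtype.ext (by ext x; rfl)
  assoc f g h := Subtype.ext (by ext x; rfl)

/-- A closed subalgebra of a Banach algebra is a Banach algebra. -/
def ofSubalg {R : Type} [NonUnitalNormedRing R] [NormedSpace ℂ R] [IsScalarTower ℂ R R]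
    [SMulCommClass ℂ R R] [CompleteSpace R] (S : NonUnitalSubalgebra ℂ R)
    (hS : IsClosed (S : Set R)) : BanAlg :=
  letI : CompleteSpace S := hS.completeSpace_coe
  letI : NormedSpace ℂ S := SubmoduleClass.toNormedSpace (R := ℂ) S
  BanAlg.of S

end BanAlg

/-- The suspension, as an object of `BanAlg`. -/
def suspObj (A : BanAlg) : BanAlg := BanAlg.ofSubalg (suspAlg A) (isClosed_vanishAlg _)

/-- The suspension of a morphism of `BanAlg`. -/
def suspHom {A B : BanAlg} (f : A ⟶ B) : suspObj A ⟶ suspObj B :=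
  ⟨suspMap f.1 f.2, continuous_suspMap f.1 f.2⟩

/-- The suspension functor `Σ : BanAlg ⥤ BanAlg`. -/
def suspFunctor : BanAlg ⥤ BanAlg where
  obj := suspObj
  map := suspHom
  map_id := by
    intro A
    apply Subtype.ext
    apply NonUnitalAlgHom.ext
    intro f
    apply Subtype.ext
    ext t
    rfl
  map_comp := by
    intro A B C f g
    apply Subtype.ext
    apply NonUnitalAlgHom.ext
    intro x
    apply Subtype.ext
    ext t
    rfl

/-- The mapping cone of a morphism of `BanAlg`, as an object of `BanAlg`. -/
def coneObj {D A : BanAlg} (π : D ⟶ A) : BanAlg :=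
  BanAlg.ofSubalg (mappingCone π.1) (isClosed_mappingCone π.1 π.2)

/-- The canonical inclusion `ι(π) : ΣA → C_π`, as a morphism of `BanAlg`. -/
def coneIotaHom {D A : BanAlg} (π : D ⟶ A) : suspObj A ⟶ coneObj π :=
  ⟨coneIota π.1, continuous_coneIota π.1⟩

/-- Extensions of Banach algebras: `i` is injective with closed range, `π` is surjective,
and `range i = ker π`. -/
structure IsExtensionHom {B D A : BanAlg} (i : B ⟶ D) (π : D ⟶ A) : Prop where
  inj : Function.Injective i.1
  closedRange : IsClosed (Set.range i.1)
  surj : Function.Surjective π.1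
  exact : Set.range i.1 = {d | π.1 d = 0}

/-- A (quotient map of an) extension is semi-split if it admits a continuous linear
(not necessarily multiplicative) section. -/
def IsSemiSplit {D A : BanAlg} (π : D ⟶ A) : Prop :=
  ∃ s : A.carrier →L[ℂ] D.carrier, ∀ a, π.1 (s a) = a

/-- The canonical comparison morphism `κ_π : B → C_π`, `b ↦ (0, i(b))`. -/
def coneKappaHom {B D A : BanAlg} (i : B ⟶ D) (π : D ⟶ A) (hext : IsExtensionHom i π) :
    B ⟶ coneObj π := by
  have hker : ∀ b, (0 : A.carrier) = π.1 (i.1 b) := by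
    intro b
    have : i.1 b ∈ {d | π.1 d = 0} := hext.exact ▸ Set.mem_range_self b
    exact this.symm
  refine ⟨{ toFun := fun b => ⟨((0 : C(unitInterval, A.carrier)), i.1 b), ⟨rfl, hker b⟩⟩,
            map_smul' := ?_, map_zero' := ?_, map_add' := ?_, map_mul' := ?_ }, ?_⟩
  · intro c b
    apply Subtype.ext
    refine Prod.ext ?_ ?_
    · simp only [map_smul]; exact (smul_zero c).symm
    · simp only [map_smul]; rfl
  · apply Subtype.ext; exact Prod.ext (by simp; rfl) (by simp; rfl)
  · intro a b
    apply Subtype.ext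
    refine Prod.ext ?_ ?_
    · simp only [map_add]; exact (add_zero 0).symm
    · simp only [map_add]; rfl
  · intro a b
    apply Subtype.ext
    refine Prod.ext ?_ ?_
    · simp only [map_mul]; exact (mul_zero 0).symm
    · simp only [map_mul]; rfl
  · exact Continuous.subtype_mk (continuous_const.prodMk (i.2.comp continuous_id)) _

/-- A functor on `BanAlg` is homotopy invariant if it identifies homotopic morphisms. -/
def HomotopyInvariant {𝒞 : Type*} [Category 𝒞] (F : BanAlg ⥤ 𝒞) : Prop :=
  ∀ (A B : BanAlg) (f g : A ⟶ B), NAlgHomotopic f.1 g.1 → F.map f = F.map g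

/-- A functor on `BanAlg` with values in an additive category is half-exact for semi-split
extensions if, for every object `X` and every semi-split extension `B ↣ D ↠ A`, the
sequences of abelian groups `Hom(X,F(B)) → Hom(X,F(D)) → Hom(X,F(A))` and
`Hom(F(A),X) → Hom(F(D),X) → Hom(F(B),X)` are exact in the middle. -/
def HalfExactFunctor {𝒞 : Type*} [Category 𝒞] [Preadditive 𝒞] (F : BanAlg ⥤ 𝒞) : Prop :=
  ∀ (B D A : BanAlg) (i : B ⟶ D) (π : D ⟶ A), IsExtensionHom i π → IsSemiSplit π →
    ∀ X : 𝒞,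
      Function.Exact (fun u : X ⟶ F.obj B => u ≫ F.map i)
        (fun u : X ⟶ F.obj D => u ≫ F.map π) ∧
      Function.Exact (fun u : F.obj A ⟶ X => F.map π ≫ u)
        (fun u : F.obj D ⟶ X => F.map i ≫ u)

/-- A functor on `BanAlg` with values in an additive category is split-exact if for every
split extension `B ↣ D ↠ A` with multiplicative continuous section `σ`, the induced map
`F(B) ⊕ F(A) → F(D)` is an isomorphism. -/
def SplitExactFunctor {𝒞 : Type*} [Category 𝒞] [Preadditive 𝒞]
    [Limits.HasBinaryBiproducts 𝒞] (F : BanAlg ⥤ 𝒞) : Prop :=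
  ∀ (B D A : BanAlg) (i : B ⟶ D) (π : D ⟶ A) (s : A ⟶ D),
    IsExtensionHom i π → s ≫ π = 𝟙 A →
    IsIso (Limits.biprod.desc (F.map i) (F.map s))

/-! ### Auxiliary development for the long exact sequence -/

section LESAux
open CategoryTheory

/-- Clamp a real number to the unit interval. -/
noncomputable def clampI (r : ℝ) : unitInterval := Set.projIcc 0 1 zero_le_one r

lemma continuous_clampI : Continuous clampI := by
  unfold clampI; exact continuous_projIcc

@[simp] lemma clampI_coe (t : unitInterval) : clampI (t : ℝ) = t := by
  show Set.projIcc 0 1 zero_le_one (t : ℝ) = t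
  rw [Set.projIcc_of_mem zero_le_one t.2]

lemma clampI_of_nonpos {r : ℝ} (h : r ≤ 0) : clampI r = 0 := by
  show Set.projIcc 0 1 zero_le_one r = 0
  rw [Set.projIcc_of_le_left zero_le_one h]; rfl

lemma clampI_of_one_le {r : ℝ} (h : 1 ≤ r) : clampI r = 1 := by
  show Set.projIcc 0 1 zero_le_one r = 1
  rw [Set.projIcc_of_right_le zero_le_one h]; rfl

namespace BanAlg

lemma hom_ext {A B : BanAlg} {f g : A ⟶ B} (h : ∀ x, f.1 x = g.1 x) : f = g :=
  Subtype.ext (NonUnitalAlgHom.ext h)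

@[simp] lemma comp_val {A B C : BanAlg} (f : A ⟶ B) (g : B ⟶ C) (x : A) :
    (f ≫ g).1 x = g.1 (f.1 x) := rfl

@[simp] lemma id_val {A : BanAlg} (x : A) : (𝟙 A : A ⟶ A).1 x = x := rfl

end BanAlg

section Combinators

variable {R : Type} [NonUnitalNormedRing R] [NormedSpace ℂ R]
  [IsScalarTower ℂ R R] [SMulCommClass ℂ R R]

/-- Evaluation at a point, as an algebra homomorphism. -/
def evHom (t : unitInterval) : C(unitInterval, R) →ₙₐ[ℂ] R where
  toFun f := f t
  map_smul' _ _ := rfl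
  map_zero' := rfl
  map_add' _ _ := rfl
  map_mul' _ _ := rfl

@[simp] lemma evHom_apply (t : unitInterval) (f : C(unitInterval, R)) :
    evHom (R := R) t f = f t := rfl

/-- Precomposition with a continuous reparametrization, as an algebra homomorphism. -/
def precompHom (φ : C(unitInterval, unitInterval)) :
    C(unitInterval, R) →ₙₐ[ℂ] C(unitInterval, R) where
  toFun f := f.comp φ
  map_smul' _ _ := by ext t; simp
  map_zero' := by ext t; simp
  map_add' _ _ := by ext t; simp
  map_mul' _ _ := by ext t; simp

@[simp] lemma precompHom_apply (φ : C(unitInterval, unitInterval)) (f : C(unitInterval, R))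
    (t : unitInterval) : precompHom (R := R) φ f t = f (φ t) := rfl

/-- The "two-parameter reparametrization" homomorphism, producing a homotopy of
reparametrizations. -/
def reparamHom (sg : C(unitInterval × unitInterval, unitInterval)) :
    C(unitInterval, R) →ₙₐ[ℂ] C(unitInterval, C(unitInterval, R)) where
  toFun f := (f.comp sg).curry
  map_smul' _ _ := by ext u t; simp
  map_zero' := by ext u t; simp
  map_add' _ _ := by ext u t; simp
  map_mul' _ _ := by ext u t; simp

@[simp] lemma reparamHom_apply (sg : C(unitInterval × unitInterval, unitInterval))
    (f : C(unitInterval, R)) (u t : unitInterval) :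
    reparamHom (R := R) sg f u t = f (sg (u, t)) := rfl

lemma continuous_reparamHom (sg : C(unitInterval × unitInterval, unitInterval)) :
    Continuous (reparamHom (R := R) sg) := by
  apply ContinuousMap.continuous_of_continuous_uncurry
  apply ContinuousMap.continuous_of_continuous_uncurry
  exact ContinuousEval.continuous_eval.comp
    ((continuous_fst.comp continuous_fst).prodMk
      (sg.continuous.comp ((continuous_snd.comp continuous_fst).prodMk continuous_snd)))

lemma continuous_cm_apply {A : Type} [TopologicalSpace A] {g : A → C(unitInterval, R)}
    (hg : Continuous g) : Continuous fun p : A × unitInterval => g p.1 p.2 :=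
  ContinuousEval.continuous_eval.comp ((hg.comp continuous_fst).prodMk continuous_snd)

/-- Corestriction of a family of continuous maps into a subalgebra. -/
def cmCodRestrict {A : Type} [NonUnitalNormedRing A] [NormedSpace ℂ A]
    [IsScalarTower ℂ A A] [SMulCommClass ℂ A A]
    (S : NonUnitalSubalgebra ℂ R) (f : A →ₙₐ[ℂ] C(unitInterval, R))
    (h : ∀ a t, f a t ∈ S) : A →ₙₐ[ℂ] C(unitInterval, ↥S) where
  toFun a := ⟨fun t => ⟨f a t, h a t⟩, ((f a).continuous).subtype_mk _⟩
  map_smul' c a := by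
    ext t
    show f (c • a) t = c • (f a t)
    rw [map_smul]; rfl
  map_zero' := by
    ext t
    show f 0 t = (0 : R)
    rw [map_zero]; rfl
  map_add' a b := by
    ext t
    show f (a + b) t = f a t + f b t
    rw [map_add]; rfl
  map_mul' a b := by
    ext t
    show f (a * b) t = f a t * f b t
    rw [map_mul]; rfl

@[simp] lemma cmCodRestrict_apply {A : Type} [NonUnitalNormedRing A] [NormedSpace ℂ A]
    [IsScalarTower ℂ A A] [SMulCommClass ℂ A A]
    (S : NonUnitalSubalgebra ℂ R) (f : A →ₙₐ[ℂ] C(unitInterval, R))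
    (h : ∀ a t, f a t ∈ S) (a : A) (t : unitInterval) :
    (cmCodRestrict S f h a t : R) = f a t := rfl

lemma continuous_cmCodRestrict {A : Type} [NonUnitalNormedRing A] [NormedSpace ℂ A]
    [IsScalarTower ℂ A A] [SMulCommClass ℂ A A]
    (S : NonUnitalSubalgebra ℂ R) (f : A →ₙₐ[ℂ] C(unitInterval, R))
    (h : ∀ a t, f a t ∈ S) (hf : Continuous f) : Continuous (cmCodRestrict S f h) := by
  apply ContinuousMap.continuous_of_continuous_uncurry
  exact (continuous_cm_apply hf).subtype_mk _

end Combinators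


section ZeroStuff
open CategoryTheory

/-- The zero Banach algebra. -/
def zeroBan : BanAlg := BanAlg.ofSubalg (vanishAlg unitInterval ℂ Set.univ) (isClosed_vanishAlg _)

lemma zeroBan_subsingleton (x y : zeroBan) : x = y :=
  Subtype.ext (ContinuousMap.ext fun t => by rw [x.2 t trivial, y.2 t trivial])

/-- The zero morphism in `BanAlg`. -/
def zeroMor (A B : BanAlg) : A ⟶ B := ⟨0, by show Continuous (fun _ => 0); exact continuous_const⟩

@[simp] lemma zeroMor_val (A B : BanAlg) (x : A) : (zeroMor A B).1 x = 0 := rfl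

lemma zeroMor_comp_zeroBan (A B : BanAlg) :
    zeroMor A zeroBan ≫ zeroMor zeroBan B = zeroMor A B :=
  BanAlg.hom_ext fun _ => rfl

lemma zeroBan_ext : IsExtensionHom (𝟙 zeroBan) (𝟙 zeroBan) where
  inj := fun _ _ h => h
  closedRange := by
    have h : Set.range (𝟙 zeroBan : zeroBan ⟶ zeroBan).1 = Set.univ :=
      Set.range_eq_univ.mpr fun x => ⟨x, rfl⟩
    rw [h]; exact isClosed_univ
  surj := fun x => ⟨x, rfl⟩
  exact := by
    ext d
    simp only [Set.mem_range, Set.mem_setOf_eq]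
    exact ⟨fun _ => zeroBan_subsingleton _ _, fun _ => ⟨d, rfl⟩⟩

lemma zeroBan_ss : IsSemiSplit (𝟙 zeroBan) := ⟨0, fun _ => zeroBan_subsingleton _ _⟩

variable {𝒜 : Type*} [Category 𝒜] [Abelian 𝒜]

lemma F_id_zeroBan (F : BanAlg ⥤ 𝒜)
    (hhe : ∀ (B D A : BanAlg) (i : B ⟶ D) (π : D ⟶ A), IsExtensionHom i π → IsSemiSplit π →
      ∃ w : F.map i ≫ F.map π = 0, (ShortComplex.mk (F.map i) (F.map π) w).Exact) :
    𝟙 (F.obj zeroBan) = 0 := by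
  obtain ⟨w, -⟩ := hhe zeroBan zeroBan zeroBan (𝟙 _) (𝟙 _) zeroBan_ext zeroBan_ss
  simpa using w

lemma F_zeroMor (F : BanAlg ⥤ 𝒜)
    (hhe : ∀ (B D A : BanAlg) (i : B ⟶ D) (π : D ⟶ A), IsExtensionHom i π → IsSemiSplit π →
      ∃ w : F.map i ≫ F.map π = 0, (ShortComplex.mk (F.map i) (F.map π) w).Exact)
    (A B : BanAlg) : F.map (zeroMor A B) = 0 := by
  rw [← zeroMor_comp_zeroBan A B, F.map_comp]
  rw [show F.map (zeroMor A zeroBan) ≫ F.map (zeroMor zeroBan B)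
      = F.map (zeroMor A zeroBan) ≫ 𝟙 _ ≫ F.map (zeroMor zeroBan B) by
    rw [Category.id_comp]]
  rw [F_id_zeroBan F hhe]
  simp

/-- A Banach algebra is contractible if its identity is homotopic to zero. -/
def Contractible (W : BanAlg) : Prop := NAlgHomotopic (𝟙 W : W ⟶ W).1 (zeroMor W W).1

lemma Contractible.F_id_zero {W : BanAlg} (hW : Contractible W) (F : BanAlg ⥤ 𝒜)
    (hhtp : HomotopyInvariant F)
    (hhe : ∀ (B D A : BanAlg) (i : B ⟶ D) (π : D ⟶ A), IsExtensionHom i π → IsSemiSplit π →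
      ∃ w : F.map i ≫ F.map π = 0, (ShortComplex.mk (F.map i) (F.map π) w).Exact) :
    𝟙 (F.obj W) = 0 := by
  calc 𝟙 (F.obj W) = F.map (𝟙 W) := (F.map_id W).symm
    _ = F.map (zeroMor W W) := hhtp W W _ _ hW
    _ = 0 := F_zeroMor F hhe W W

lemma comp_left_zero_of_id_zero {W Y : 𝒜} (h : 𝟙 W = 0) (u : W ⟶ Y) : u = 0 := by
  rw [← Category.id_comp u, h, Limits.zero_comp]

lemma comp_right_zero_of_id_zero {W Y : 𝒜} (h : 𝟙 W = 0) (u : Y ⟶ W) : u = 0 := by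
  rw [← Category.comp_id u, h, Limits.comp_zero]

end ZeroStuff

section OMT

variable {B D : BanAlg}

/-- The continuous linear map underlying a morphism of Banach algebras. -/
def toCLM (i : B ⟶ D) : B.carrier →L[ℂ] D.carrier :=
  { toFun := i.1
    map_add' := map_add i.1
    map_smul' := fun c x => map_smul i.1 c x
    cont := i.2 }

@[simp] lemma toCLM_apply (i : B ⟶ D) (b : B.carrier) : toCLM i b = i.1 b := rfl

lemma toCLM_range_coe (i : B ⟶ D) :
    ((LinearMap.range (toCLM i : B.carrier →ₗ[ℂ] D.carrier) : Submodule ℂ D.carrier) : Set D.carrier) = Set.range i.1 := by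
  ext x
  simp only [SetLike.mem_coe, LinearMap.mem_range, Set.mem_range, ContinuousLinearMap.coe_coe]
  rfl

/-- By the open mapping theorem, a continuous injective homomorphism with closed range
admits a continuous linear inverse on its range. -/
noncomputable def ranEquiv (i : B ⟶ D) (hinj : Function.Injective i.1)
    (hcl : IsClosed (Set.range i.1)) :
    B.carrier ≃L[ℂ] ↥(LinearMap.range (toCLM i : B.carrier →ₗ[ℂ] D.carrier)) :=
  letI : CompleteSpace ↥(LinearMap.range (toCLM i : B.carrier →ₗ[ℂ] D.carrier)) := by
    have h : IsClosed ((LinearMap.range (toCLM i : B.carrier →ₗ[ℂ] D.carrier) : Submodule ℂ D.carrier) : Set D.carrier) := by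
      rw [toCLM_range_coe]; exact hcl
    exact h.completeSpace_coe
  ContinuousLinearEquiv.ofBijective
    ((toCLM i).codRestrict (LinearMap.range (toCLM i : B.carrier →ₗ[ℂ] D.carrier)) (fun x => LinearMap.mem_range_self _ x))
    (LinearMap.ker_eq_bot.mpr fun x y hxy => hinj (congrArg Subtype.val hxy))
    (LinearMap.range_eq_top.mpr (by
      rintro ⟨x, hx⟩
      obtain ⟨y, hy⟩ := hx
      exact ⟨y, Subtype.ext hy⟩))

lemma ranEquiv_apply_coe (i : B ⟶ D) (hinj : Function.Injective i.1)
    (hcl : IsClosed (Set.range i.1)) (b : B.carrier) :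
    ((ranEquiv i hinj hcl b : ↥(LinearMap.range (toCLM i : B.carrier →ₗ[ℂ] D.carrier))) : D.carrier) = i.1 b := by
  rfl

lemma i_ranEquiv_symm (i : B ⟶ D) (hinj : Function.Injective i.1)
    (hcl : IsClosed (Set.range i.1)) (x : ↥(LinearMap.range (toCLM i : B.carrier →ₗ[ℂ] D.carrier))) :
    i.1 ((ranEquiv i hinj hcl).symm x) = (x : D.carrier) := by
  conv_rhs => rw [← (ranEquiv i hinj hcl).apply_symm_apply x]
  rw [← ranEquiv_apply_coe i hinj hcl]

lemma mem_ran_of_mem_range (i : B ⟶ D) {d : D.carrier} (h : d ∈ Set.range i.1) :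
    d ∈ LinearMap.range (toCLM i : B.carrier →ₗ[ℂ] D.carrier) := by
  have := (toCLM_range_coe i).symm ▸ h
  exact this

end OMT

section ConeStuff
open CategoryTheory

lemma continuous_eval_cm {X Y : Type*} [TopologicalSpace X] [TopologicalSpace Y]
    {g : X → C(unitInterval, Y)} {h : X → unitInterval}
    (hg : Continuous g) (hh : Continuous h) : Continuous fun x => g x (h x) :=
  ContinuousEval.continuous_eval.comp (hg.prodMk hh)

lemma mem_suspAlg_of {A : Type} [NonUnitalNormedRing A] [NormedSpace ℂ A]
    [IsScalarTower ℂ A A] [SMulCommClass ℂ A A] {f : C(unitInterval, A)}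
    (h0 : f 0 = 0) (h1 : f 1 = 0) : f ∈ suspAlg A := by
  intro y hy
  rcases hy with rfl | hy
  · exact h0
  · rw [Set.mem_singleton_iff.mp hy]; exact h1

/-- The cone `CA` of a Banach algebra: continuous functions on `[0,1]` vanishing at `1`. -/
def coneAlg (A : BanAlg) : BanAlg :=
  BanAlg.ofSubalg (vanishAlg unitInterval A {1}) (isClosed_vanishAlg _)

lemma coneAlg_apply_one {A : BanAlg} (c : coneAlg A) : c.1 1 = 0 := c.2 1 rfl

lemma mem_coneAlg_of {A : BanAlg} {f : C(unitInterval, A.carrier)} (h1 : f 1 = 0) :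
    f ∈ vanishAlg unitInterval A.carrier {1} := by
  intro y hy
  rw [Set.mem_singleton_iff.mp hy]; exact h1

variable {B D A : BanAlg}

/-- The canonical epimorphism `C_π → D` as a morphism of `BanAlg`. -/
def epsHom (π : D ⟶ A) : coneObj π ⟶ D := ⟨coneEps π.1, continuous_coneEps π.1⟩

@[simp] lemma epsHom_val (π : D ⟶ A) (x : (coneObj π).carrier) :
    (epsHom π).1 x = x.1.2 := rfl

/-- The canonical map `C_π → CA`, `(c,d) ↦ c`, as a morphism of `BanAlg`. -/
def qCone (π : D ⟶ A) : coneObj π ⟶ coneAlg A := by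
  refine ⟨{ toFun := fun x => ⟨x.1.1, mem_coneAlg_of x.2.1⟩,
            map_smul' := fun c x => rfl, map_zero' := rfl,
            map_add' := fun x y => rfl, map_mul' := fun x y => rfl }, ?_⟩
  exact Continuous.subtype_mk (continuous_fst.comp continuous_subtype_val) _

@[simp] lemma qCone_val (π : D ⟶ A) (x : (coneObj π).carrier) :
    ((qCone π).1 x).1 = x.1.1 := rfl

lemma kappa_comp_eps (i : B ⟶ D) (π : D ⟶ A) (hext : IsExtensionHom i π) :
    coneKappaHom i π hext ≫ epsHom π = i :=
  BanAlg.hom_ext fun b => rfl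

/-- The canonical continuous linear section of `ε : C_π → D`. -/
noncomputable def coneSec (π : D ⟶ A) : D.carrier →L[ℂ] (coneObj π).carrier where
  toFun d := ⟨(⟨fun t => (((unitInterval.symm t : unitInterval) : ℝ) : ℂ) • π.1 d,
      ((Complex.continuous_ofReal.comp
        (continuous_subtype_val.comp unitInterval.continuous_symm)).smul continuous_const)⟩, d),
    ⟨by simp, by simp⟩⟩
  map_add' d d' := by
    refine Subtype.ext (Prod.ext ?_ rfl)
    ext t
    show (((unitInterval.symm t : unitInterval) : ℝ) : ℂ) • π.1 (d + d')
      = (((unitInterval.symm t : unitInterval) : ℝ) : ℂ) • π.1 d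
        + (((unitInterval.symm t : unitInterval) : ℝ) : ℂ) • π.1 d'
    rw [map_add, smul_add]
  map_smul' c d := by
    refine Subtype.ext (Prod.ext ?_ rfl)
    ext t
    show (((unitInterval.symm t : unitInterval) : ℝ) : ℂ) • π.1 (c • d)
      = c • ((((unitInterval.symm t : unitInterval) : ℝ) : ℂ) • π.1 d)
    rw [map_smul, smul_comm]
  cont := by
    refine Continuous.subtype_mk (Continuous.prodMk ?_ continuous_id) _
    apply ContinuousMap.continuous_of_continuous_uncurry
    exact ((Complex.continuous_ofReal.comp
      (continuous_subtype_val.comp (unitInterval.continuous_symm.comp continuous_snd))).smul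
      (π.2.comp continuous_fst))

@[simp] lemma eps_coneSec (π : D ⟶ A) (d : D.carrier) : (epsHom π).1 (coneSec π d) = d := rfl

lemma coneIota_range (π : D ⟶ A) :
    Set.range (coneIotaHom π).1 = {x : (coneObj π).carrier | x.1.2 = 0} := by
  ext x
  constructor
  · rintro ⟨f, rfl⟩; rfl
  · intro hx
    refine ⟨⟨x.1.1, mem_suspAlg_of ?_ x.2.1⟩, ?_⟩
    · rw [x.2.2, hx, map_zero]
    · exact Subtype.ext (Prod.ext rfl hx.symm)

lemma cone_ext (π : D ⟶ A) : IsExtensionHom (coneIotaHom π) (epsHom π) where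
  inj := by
    intro f g h
    exact Subtype.ext (congrArg (fun x => x.1.1) h)
  closedRange := by
    rw [coneIota_range]
    exact isClosed_eq (continuous_snd.comp continuous_subtype_val) continuous_const
  surj := fun d => ⟨coneSec π d, rfl⟩
  exact := by rw [coneIota_range]; rfl

lemma cone_ss (π : D ⟶ A) : IsSemiSplit (epsHom π) := ⟨coneSec π, fun _ => rfl⟩

lemma kappa_range (i : B ⟶ D) (π : D ⟶ A) (hext : IsExtensionHom i π) :
    Set.range (coneKappaHom i π hext).1 = {x : (coneObj π).carrier | x.1.1 = 0} := by
  ext x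
  constructor
  · rintro ⟨b, rfl⟩; rfl
  · intro hx
    have hd : x.1.2 ∈ Set.range i.1 := by
      rw [hext.exact]
      show π.1 x.1.2 = 0
      rw [← x.2.2, hx]; rfl
    obtain ⟨b, hb⟩ := hd
    exact ⟨b, Subtype.ext (Prod.ext hx.symm hb)⟩

lemma kappaq_ext (i : B ⟶ D) (π : D ⟶ A) (hext : IsExtensionHom i π) (hss : IsSemiSplit π) :
    IsExtensionHom (coneKappaHom i π hext) (qCone π) where
  inj := by
    intro b b' h
    exact hext.inj (congrArg (fun x => x.1.2) h)
  closedRange := by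
    rw [kappa_range]
    exact isClosed_eq (continuous_fst.comp continuous_subtype_val) continuous_const
  surj := by
    intro c
    obtain ⟨s, hs⟩ := hss
    exact ⟨⟨(c.1, s (c.1 0)), ⟨coneAlg_apply_one c, (hs _).symm⟩⟩, Subtype.ext rfl⟩
  exact := by
    rw [kappa_range]
    ext x
    simp only [Set.mem_setOf_eq]
    constructor
    · intro h
      exact Subtype.ext h
    · intro h
      exact congrArg Subtype.val h

lemma qCone_ss (π : D ⟶ A) (hss : IsSemiSplit π) : IsSemiSplit (qCone π) := by
  obtain ⟨s, hs⟩ := hss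
  refine ⟨{ toFun := fun c => ⟨(c.1, s (c.1 0)), ⟨coneAlg_apply_one c, (hs _).symm⟩⟩,
            map_add' := ?_, map_smul' := ?_, cont := ?_ }, fun c => Subtype.ext rfl⟩
  · intro c c'
    refine Subtype.ext (Prod.ext rfl ?_)
    show s ((c.1 + c'.1) 0) = s (c.1 0) + s (c'.1 0)
    rw [ContinuousMap.add_apply, map_add]
  · intro r c
    refine Subtype.ext (Prod.ext rfl ?_)
    show s ((r • c.1) 0) = r • s (c.1 0)
    rw [ContinuousMap.smul_apply, map_smul]
  · refine Continuous.subtype_mk (Continuous.prodMk continuous_subtype_val ?_) _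
    exact s.continuous.comp (continuous_eval_cm continuous_subtype_val continuous_const)

end ConeStuff

section Contractions
open CategoryTheory

/-- The shift reparametrization `(u, t) ↦ min(1, u + t)`. -/
noncomputable def shiftCM : C(unitInterval × unitInterval, unitInterval) :=
  ⟨fun p => clampI ((p.1 : ℝ) + (p.2 : ℝ)),
    continuous_clampI.comp ((continuous_subtype_val.comp continuous_fst).add
      (continuous_subtype_val.comp continuous_snd))⟩

lemma shiftCM_zero (t : unitInterval) : shiftCM (0, t) = t := by
  show clampI ((0 : ℝ) + (t : ℝ)) = t
  rw [zero_add, clampI_coe]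

lemma shiftCM_one (t : unitInterval) : shiftCM (1, t) = 1 := by
  show clampI ((1 : ℝ) + (t : ℝ)) = 1
  exact clampI_of_one_le (le_add_of_nonneg_right t.2.1)

lemma shiftCM_snd_one (u : unitInterval) : shiftCM (u, 1) = 1 := by
  show clampI ((u : ℝ) + (1 : ℝ)) = 1
  exact clampI_of_one_le (le_add_of_nonneg_left u.2.1)

lemma coneAlg_contractible (A : BanAlg) : Contractible (coneAlg A) := by
  set S := vanishAlg unitInterval A.carrier {1} with hS
  refine ⟨cmCodRestrict S ((reparamHom shiftCM).comp (NonUnitalSubalgebraClass.subtype S))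
      (fun c u => ?_), ?_, ?_, ?_⟩
  · intro y hy
    rw [Set.mem_singleton_iff.mp hy]
    show c.1 (shiftCM (u, 1)) = 0
    rw [shiftCM_snd_one]
    exact coneAlg_apply_one (A := A) c
  · exact continuous_cmCodRestrict _ _ _
      ((continuous_reparamHom shiftCM).comp continuous_subtype_val)
  · intro c
    refine Subtype.ext (ContinuousMap.ext fun t => ?_)
    show c.1 (shiftCM (0, t)) = c.1 t
    rw [shiftCM_zero]
  · intro c
    refine Subtype.ext (ContinuousMap.ext fun t => ?_)
    show c.1 (shiftCM (1, t)) = 0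
    rw [shiftCM_one]
    exact coneAlg_apply_one (A := A) c

/-- Applying a contraction of `W` pointwise gives a contraction of `ΣW`. -/
noncomputable def suspContractionHom {W : BanAlg}
    (Hw : W.carrier →ₙₐ[ℂ] C(unitInterval, W.carrier)) (hc : Continuous Hw) :
    (suspObj W).carrier →ₙₐ[ℂ] C(unitInterval, (suspObj W).carrier) where
  toFun f := ⟨fun u => ⟨⟨fun t => Hw (f.1 t) u,
      continuous_eval_cm (hc.comp ((f.1).continuous)) continuous_const⟩,
      mem_suspAlg_of
        (by show Hw (f.1 0) u = 0; rw [susp_apply_zero f, map_zero]; rfl)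
        (by show Hw (f.1 1) u = 0; rw [susp_apply_one f, map_zero]; rfl)⟩,
    by
      apply Continuous.subtype_mk
      apply ContinuousMap.continuous_of_continuous_uncurry
      show Continuous fun p : unitInterval × unitInterval => Hw (f.1 p.2) p.1
      exact continuous_eval_cm (hc.comp ((f.1).continuous.comp continuous_snd)) continuous_fst⟩
  map_smul' r f := by
    ext u
    refine Subtype.ext (ContinuousMap.ext fun t => ?_)
    show Hw ((r • f).1 t) u = r • Hw (f.1 t) u
    rw [show (r • f).1 t = r • (f.1 t) from rfl, map_smul]
    rfl
  map_zero' := by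
    ext u
    refine Subtype.ext (ContinuousMap.ext fun t => ?_)
    show Hw ((0 : (suspObj W).carrier).1 t) u = 0
    rw [show ((0 : (suspObj W).carrier)).1 t = 0 from rfl, map_zero]
    rfl
  map_add' f g := by
    ext u
    refine Subtype.ext (ContinuousMap.ext fun t => ?_)
    show Hw ((f + g).1 t) u = Hw (f.1 t) u + Hw (g.1 t) u
    rw [show (f + g).1 t = f.1 t + g.1 t from rfl, map_add]
    rfl
  map_mul' f g := by
    ext u
    refine Subtype.ext (ContinuousMap.ext fun t => ?_)
    show Hw ((f * g).1 t) u = Hw (f.1 t) u * Hw (g.1 t) u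
    rw [show (f * g).1 t = f.1 t * g.1 t from rfl, map_mul]
    rfl

lemma susp_contractible {W : BanAlg} (hW : Contractible W) : Contractible (suspObj W) := by
  obtain ⟨Hw, hc, h0, h1⟩ := hW
  refine ⟨suspContractionHom Hw hc, ?_, ?_, ?_⟩
  · apply ContinuousMap.continuous_of_continuous_uncurry
    refine Continuous.subtype_mk ?_ _
    apply ContinuousMap.continuous_of_continuous_uncurry
    show Continuous fun p : ((suspObj W).carrier × unitInterval) × unitInterval
      => Hw (p.1.1.1 p.2) p.1.2
    refine continuous_eval_cm (g := fun p : ((suspObj W).carrier × unitInterval) × unitInterval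
      => Hw (p.1.1.1 p.2)) (h := fun p => p.1.2) ?_ (continuous_snd.comp continuous_fst)
    exact hc.comp (continuous_eval_cm
      (continuous_subtype_val.comp (continuous_fst.comp continuous_fst)) continuous_snd)
  · intro f
    refine Subtype.ext (ContinuousMap.ext fun t => ?_)
    show Hw (f.1 t) 0 = f.1 t
    rw [h0]
    rfl
  · intro f
    refine Subtype.ext (ContinuousMap.ext fun t => ?_)
    show Hw (f.1 t) 1 = 0
    rw [h1]
    rfl

end Contractions

section PathSpace
open CategoryTheory

/-- max on the unit interval -/
def maxI (a b : unitInterval) : unitInterval :=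
  ⟨max a.1 b.1, ⟨le_max_of_le_left a.2.1, max_le a.2.2 b.2.2⟩⟩

lemma maxI_one_right (a : unitInterval) : maxI a 1 = 1 := Subtype.ext (max_eq_right a.2.2)
lemma maxI_zero_right (a : unitInterval) : maxI a 0 = a := Subtype.ext (max_eq_left a.2.1)
lemma maxI_one_left (a : unitInterval) : maxI 1 a = 1 := Subtype.ext (max_eq_left a.2.2)
lemma maxI_zero_left (a : unitInterval) : maxI 0 a = a := Subtype.ext (max_eq_right a.2.1)

lemma continuous_maxI : Continuous fun p : unitInterval × unitInterval => maxI p.1 p.2 :=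
  Continuous.subtype_mk ((continuous_subtype_val.comp continuous_fst).max
    (continuous_subtype_val.comp continuous_snd)) _

variable {B D A : BanAlg} (i : B ⟶ D) (π : D ⟶ A) (hext : IsExtensionHom i π)

lemma kappa_val (b : B.carrier) :
    ((coneKappaHom i π hext).1 b).1 = ((0 : C(unitInterval, A.carrier)), i.1 b) := rfl

lemma kappa_inj : Function.Injective (coneKappaHom i π hext).1 := fun b b' h =>
  hext.inj (congrArg (fun x => x.1.2) h)

/-- The mapping path space `X = {(b, x) : x(0) = κ(b)}` of `κ : B → C_π`. -/
def pathSub : NonUnitalSubalgebra ℂ (B.carrier × C(unitInterval, (coneObj π).carrier)) where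
  carrier := {p | p.2 0 = (coneKappaHom i π hext).1 p.1}
  add_mem' := by
    intro p q hp hq
    show (p.2 + q.2) 0 = (coneKappaHom i π hext).1 (p.1 + q.1)
    rw [ContinuousMap.add_apply, hp, hq, map_add]
  zero_mem' := by
    show (0 : C(unitInterval, (coneObj π).carrier)) 0 = (coneKappaHom i π hext).1 0
    have h : (coneKappaHom i π hext).1 0 = 0 := map_zero _
    rw [h]; rfl
  mul_mem' := by
    intro p q hp hq
    show (p.2 * q.2) 0 = (coneKappaHom i π hext).1 (p.1 * q.1)
    rw [ContinuousMap.mul_apply, hp, hq, map_mul]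
  smul_mem' := by
    intro c p hp
    show (c • p.2) 0 = (coneKappaHom i π hext).1 (c • p.1)
    rw [ContinuousMap.smul_apply, hp, map_smul]

lemma isClosed_pathSub :
    IsClosed ((pathSub i π hext : Set (B.carrier × C(unitInterval, (coneObj π).carrier)))) :=
  isClosed_eq (continuous_eval_cm continuous_snd continuous_const)
    ((coneKappaHom i π hext).2.comp continuous_fst)

/-- The mapping cocone `V = {(b, x) : x(0) = κ(b), x(1) = 0}` of `κ : B → C_π`. -/
def cocSub : NonUnitalSubalgebra ℂ (B.carrier × C(unitInterval, (coneObj π).carrier)) where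
  carrier := {p | p.2 0 = (coneKappaHom i π hext).1 p.1 ∧ p.2 1 = 0}
  add_mem' := by
    rintro p q ⟨hp, hp1⟩ ⟨hq, hq1⟩
    constructor
    · show (p.2 + q.2) 0 = (coneKappaHom i π hext).1 (p.1 + q.1)
      rw [ContinuousMap.add_apply, hp, hq, map_add]
    · show (p.2 + q.2) 1 = 0
      rw [ContinuousMap.add_apply, hp1, hq1, add_zero]
  zero_mem' := by
    constructor
    · show (0 : C(unitInterval, (coneObj π).carrier)) 0 = (coneKappaHom i π hext).1 0
      have h : (coneKappaHom i π hext).1 0 = 0 := map_zero _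
      rw [h]; rfl
    · rfl
  mul_mem' := by
    rintro p q ⟨hp, hp1⟩ ⟨hq, hq1⟩
    constructor
    · show (p.2 * q.2) 0 = (coneKappaHom i π hext).1 (p.1 * q.1)
      rw [ContinuousMap.mul_apply, hp, hq, map_mul]
    · show (p.2 * q.2) 1 = 0
      rw [ContinuousMap.mul_apply, hp1, hq1, mul_zero]
  smul_mem' := by
    rintro c p ⟨hp, hp1⟩
    constructor
    · show (c • p.2) 0 = (coneKappaHom i π hext).1 (c • p.1)
      rw [ContinuousMap.smul_apply, hp, map_smul]
    · show (c • p.2) 1 = 0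
      rw [ContinuousMap.smul_apply, hp1, smul_zero]

lemma isClosed_cocSub :
    IsClosed ((cocSub i π hext : Set (B.carrier × C(unitInterval, (coneObj π).carrier)))) := by
  have : (cocSub i π hext : Set (B.carrier × C(unitInterval, (coneObj π).carrier)))
      = (pathSub i π hext : Set (B.carrier × C(unitInterval, (coneObj π).carrier))) ∩
      {p : B.carrier × C(unitInterval, (coneObj π).carrier) | p.2 1 = 0} := rfl
  rw [this]
  exact (isClosed_pathSub i π hext).inter
    (isClosed_eq (continuous_eval_cm continuous_snd continuous_const) continuous_const)

/-- The path space as an object of `BanAlg`. -/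
def XObj : BanAlg := BanAlg.ofSubalg (pathSub i π hext) (isClosed_pathSub i π hext)

/-- The mapping cocone as an object of `BanAlg`. -/
def VObj : BanAlg := BanAlg.ofSubalg (cocSub i π hext) (isClosed_cocSub i π hext)

/-- Inclusion `V → X`. -/
def jV : VObj i π hext ⟶ XObj i π hext :=
  ⟨{ toFun := fun v => ⟨v.1, v.2.1⟩,
     map_smul' := fun _ _ => rfl, map_zero' := rfl,
     map_add' := fun _ _ => rfl, map_mul' := fun _ _ => rfl },
   Continuous.subtype_mk continuous_subtype_val _⟩

/-- Evaluation `X → C_π` at `1`. -/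
def pXmor : XObj i π hext ⟶ coneObj π :=
  ⟨{ toFun := fun x => x.1.2 1,
     map_smul' := fun _ _ => rfl, map_zero' := rfl,
     map_add' := fun _ _ => rfl, map_mul' := fun _ _ => rfl },
   continuous_eval_cm (continuous_snd.comp continuous_subtype_val) continuous_const⟩

/-- The canonical inclusion `B → X`, a homotopy equivalence. -/
def eB : B ⟶ XObj i π hext := by
  refine ⟨{
     toFun := fun b => ⟨(b, ContinuousMap.const unitInterval ((coneKappaHom i π hext).1 b)), rfl⟩,
     map_smul' := fun c b => ?_,
     map_zero' := ?_,
     map_add' := fun b b' => ?_,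
     map_mul' := fun b b' => ?_ }, ?_⟩
  · refine Subtype.ext (Prod.ext rfl (ContinuousMap.ext fun t => ?_))
    show (coneKappaHom i π hext).1 (c • b) = c • (coneKappaHom i π hext).1 b
    rw [map_smul]
  · refine Subtype.ext (Prod.ext rfl (ContinuousMap.ext fun t => ?_))
    show (coneKappaHom i π hext).1 0 = 0
    rw [map_zero]
  · refine Subtype.ext (Prod.ext rfl (ContinuousMap.ext fun t => ?_))
    show (coneKappaHom i π hext).1 (b + b')
      = (coneKappaHom i π hext).1 b + (coneKappaHom i π hext).1 b'
    rw [map_add]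
  · refine Subtype.ext (Prod.ext rfl (ContinuousMap.ext fun t => ?_))
    show (coneKappaHom i π hext).1 (b * b')
      = (coneKappaHom i π hext).1 b * (coneKappaHom i π hext).1 b'
    rw [map_mul]
  · refine Continuous.subtype_mk (Continuous.prodMk continuous_id ?_) _
    exact (ContinuousMap.continuous_const' ).comp (coneKappaHom i π hext).2

/-- The retraction `X → B`. -/
def rX : XObj i π hext ⟶ B :=
  ⟨{ toFun := fun x => x.1.1,
     map_smul' := fun _ _ => rfl, map_zero' := rfl,
     map_add' := fun _ _ => rfl, map_mul' := fun _ _ => rfl },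
   continuous_fst.comp continuous_subtype_val⟩

lemma eB_rX : eB i π hext ≫ rX i π hext = 𝟙 B := BanAlg.hom_ext fun b => rfl

lemma eB_pX : eB i π hext ≫ pXmor i π hext = coneKappaHom i π hext :=
  BanAlg.hom_ext fun b => rfl

lemma jV_pX_vanish (v : (VObj i π hext).carrier) :
    (pXmor i π hext).1 ((jV i π hext).1 v) = 0 := v.2.2

/-- The scaling reparametrization `(u, t) ↦ (1-u)·t`. -/
noncomputable def scaleCM : C(unitInterval × unitInterval, unitInterval) :=
  ⟨fun p => clampI ((1 - (p.1 : ℝ)) * (p.2 : ℝ)),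
    continuous_clampI.comp ((continuous_const.sub
      (continuous_subtype_val.comp continuous_fst)).mul
      (continuous_subtype_val.comp continuous_snd))⟩

lemma scaleCM_zero (t : unitInterval) : scaleCM (0, t) = t := by
  show clampI ((1 - (0:ℝ)) * (t : ℝ)) = t
  rw [sub_zero, one_mul, clampI_coe]

lemma scaleCM_one (t : unitInterval) : scaleCM (1, t) = 0 := by
  show clampI ((1 - (1:ℝ)) * (t : ℝ)) = 0
  rw [sub_self, zero_mul]
  exact clampI_of_nonpos le_rfl

lemma scaleCM_snd_zero (u : unitInterval) : scaleCM (u, 0) = 0 := by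
  show clampI ((1 - (u:ℝ)) * ((0 : unitInterval) : ℝ)) = 0
  rw [show (((0 : unitInterval)) : ℝ) = 0 from rfl, mul_zero]
  exact clampI_of_nonpos le_rfl

/-- The retraction homotopy on the path space. -/
lemma pathspace_homotopy :
    NAlgHomotopic (𝟙 (XObj i π hext) : _ ⟶ _).1 (rX i π hext ≫ eB i π hext).1 := by
  refine ⟨{
      toFun := fun x => ⟨fun u => ⟨(x.1.1, (x.1.2).comp (scaleCM.curry u)), ?_⟩, ?_⟩,
      map_smul' := fun c x => ?_,
      map_zero' := ?_,
      map_add' := fun x y => ?_,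
      map_mul' := fun x y => ?_ }, ?_, ?_, ?_⟩
  · show x.1.2 (scaleCM (u, 0)) = (coneKappaHom i π hext).1 x.1.1
    rw [scaleCM_snd_zero]
    exact x.2
  · apply Continuous.subtype_mk
    apply Continuous.prodMk continuous_const
    apply ContinuousMap.continuous_of_continuous_uncurry
    show Continuous fun p : unitInterval × unitInterval => x.1.2 (scaleCM (p.1, p.2))
    exact (x.1.2).continuous.comp (scaleCM.continuous.comp
      (continuous_fst.prodMk continuous_snd))
  · ext u
    refine Subtype.ext (Prod.ext rfl (ContinuousMap.ext fun t => rfl))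
  · ext u
    refine Subtype.ext (Prod.ext rfl (ContinuousMap.ext fun t => rfl))
  · ext u
    refine Subtype.ext (Prod.ext rfl (ContinuousMap.ext fun t => rfl))
  · ext u
    refine Subtype.ext (Prod.ext rfl (ContinuousMap.ext fun t => rfl))
  · apply ContinuousMap.continuous_of_continuous_uncurry
    apply Continuous.subtype_mk
    apply Continuous.prodMk (continuous_fst.comp (continuous_subtype_val.comp continuous_fst))
    apply ContinuousMap.continuous_of_continuous_uncurry
    show Continuous fun p : ((XObj i π hext).carrier × unitInterval) × unitInterval
      => p.1.1.1.2 (scaleCM (p.1.2, p.2))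
    refine continuous_eval_cm ?_ ?_
    · exact continuous_snd.comp (continuous_subtype_val.comp
        (continuous_fst.comp continuous_fst))
    · exact scaleCM.continuous.comp ((continuous_snd.comp continuous_fst).prodMk
        continuous_snd)
  · intro x
    refine Subtype.ext (Prod.ext rfl (ContinuousMap.ext fun t => ?_))
    show x.1.2 (scaleCM (0, t)) = x.1.2 t
    rw [scaleCM_zero]
  · intro x
    refine Subtype.ext (Prod.ext rfl (ContinuousMap.ext fun t => ?_))
    show x.1.2 (scaleCM (1, t)) = (coneKappaHom i π hext).1 x.1.1
    rw [scaleCM_one]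
    exact x.2

end PathSpace

section PathExt
open CategoryTheory

variable {B D A : BanAlg} (i : B ⟶ D) (π : D ⟶ A) (hext : IsExtensionHom i π)

include hext in
lemma dmem (s : A.carrier →L[ℂ] D.carrier) (hs : ∀ a, π.1 (s a) = a)
    (y : (coneObj π).carrier) :
    y.1.2 - s (y.1.1 0) ∈ LinearMap.range (toCLM i : B.carrier →ₗ[ℂ] D.carrier) := by
  apply mem_ran_of_mem_range
  rw [hext.exact]
  show π.1 (y.1.2 - s (y.1.1 0)) = 0
  rw [map_sub, hs, ← y.2.2, sub_self]

/-- The continuous linear section of `p : X → C_π`. -/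
noncomputable def sigmaX (s : A.carrier →L[ℂ] D.carrier) (hs : ∀ a, π.1 (s a) = a) :
    (coneObj π).carrier →L[ℂ] (XObj i π hext).carrier := by
  have hcc : ∀ (y : (coneObj π).carrier) (u : unitInterval),
      Continuous fun τ => y.1.1 (maxI τ (unitInterval.symm u)) :=
    fun y u => (y.1.1).continuous.comp
      (continuous_maxI.comp (continuous_id.prodMk continuous_const))
  have hmem : ∀ (y : (coneObj π).carrier) (u : unitInterval),
      ((⟨fun τ => y.1.1 (maxI τ (unitInterval.symm u)), hcc y u⟩ : C(unitInterval, A.carrier)),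
        y.1.2 - s (y.1.1 0) + s (y.1.1 (unitInterval.symm u))) ∈ mappingCone π.1 := by
    intro y u
    constructor
    · show y.1.1 (maxI 1 (unitInterval.symm u)) = 0
      rw [maxI_one_left]
      exact y.2.1
    · show y.1.1 (maxI 0 (unitInterval.symm u))
        = π.1 (y.1.2 - s (y.1.1 0) + s (y.1.1 (unitInterval.symm u)))
      rw [maxI_zero_left, map_add, map_sub, hs, hs, ← y.2.2, sub_self, zero_add]
  have hpc : ∀ y : (coneObj π).carrier,
      Continuous fun u : unitInterval =>
        (⟨(⟨fun τ => y.1.1 (maxI τ (unitInterval.symm u)), hcc y u⟩,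
          y.1.2 - s (y.1.1 0) + s (y.1.1 (unitInterval.symm u))), hmem y u⟩
          : (coneObj π).carrier) := by
    intro y
    apply Continuous.subtype_mk
    refine Continuous.prodMk ?_ ?_
    · apply ContinuousMap.continuous_of_continuous_uncurry
      show Continuous fun p : unitInterval × unitInterval
        => y.1.1 (maxI p.2 (unitInterval.symm p.1))
      exact (y.1.1).continuous.comp (continuous_maxI.comp
        (continuous_snd.prodMk (unitInterval.continuous_symm.comp continuous_fst)))
    · exact continuous_const.add (s.continuous.comp ((y.1.1).continuous.comp
        unitInterval.continuous_symm))
  have hmemX : ∀ y : (coneObj π).carrier,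
      ((((ranEquiv i hext.inj hext.closedRange).symm ⟨y.1.2 - s (y.1.1 0), dmem i π hext s hs y⟩),
        (⟨fun u => ⟨(⟨fun τ => y.1.1 (maxI τ (unitInterval.symm u)), hcc y u⟩,
          y.1.2 - s (y.1.1 0) + s (y.1.1 (unitInterval.symm u))), hmem y u⟩, hpc y⟩
          : C(unitInterval, (coneObj π).carrier)))
        ∈ pathSub i π hext) := by
    intro y
    show (⟨(⟨fun τ => y.1.1 (maxI τ (unitInterval.symm 0)), hcc y 0⟩,
        y.1.2 - s (y.1.1 0) + s (y.1.1 (unitInterval.symm 0))), hmem y 0⟩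
        : (coneObj π).carrier) = (coneKappaHom i π hext).1 _
    refine Subtype.ext (Prod.ext ?_ ?_)
    · refine ContinuousMap.ext fun τ => ?_
      show y.1.1 (maxI τ (unitInterval.symm 0)) = 0
      rw [unitInterval.symm_zero, maxI_one_right]
      exact y.2.1
    · show y.1.2 - s (y.1.1 0) + s (y.1.1 (unitInterval.symm 0))
        = i.1 ((ranEquiv i hext.inj hext.closedRange).symm
            ⟨y.1.2 - s (y.1.1 0), dmem i π hext s hs y⟩)
      rw [unitInterval.symm_zero, y.2.1, map_zero s, add_zero, i_ranEquiv_symm]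
  refine { toFun := fun y => ⟨(_, ⟨fun u => ⟨(_, _), hmem y u⟩, hpc y⟩), hmemX y⟩,
           map_add' := ?_, map_smul' := ?_, cont := ?_ }
  · intro y y'
    refine Subtype.ext (Prod.ext ?_ ?_)
    · show (ranEquiv i hext.inj hext.closedRange).symm _
        = (ranEquiv i hext.inj hext.closedRange).symm _ + (ranEquiv i hext.inj hext.closedRange).symm _
      rw [← map_add]
      congr 1
      refine Subtype.ext ?_
      show (y + y').1.2 - s ((y + y').1.1 0)
        = (y.1.2 - s (y.1.1 0)) + (y'.1.2 - s (y'.1.1 0))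
      show y.1.2 + y'.1.2 - s (y.1.1 0 + y'.1.1 0) = _
      rw [map_add]
      abel
    · refine ContinuousMap.ext fun u => ?_
      refine Subtype.ext (Prod.ext (ContinuousMap.ext fun τ => rfl) ?_)
      show (y + y').1.2 - s ((y + y').1.1 0) + s ((y + y').1.1 (unitInterval.symm u))
        = (y.1.2 - s (y.1.1 0) + s (y.1.1 (unitInterval.symm u)))
          + (y'.1.2 - s (y'.1.1 0) + s (y'.1.1 (unitInterval.symm u)))
      show y.1.2 + y'.1.2 - s (y.1.1 0 + y'.1.1 0)
          + s (y.1.1 (unitInterval.symm u) + y'.1.1 (unitInterval.symm u)) = _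
      rw [map_add, map_add]
      abel
  · intro c y
    refine Subtype.ext (Prod.ext ?_ ?_)
    · show (ranEquiv i hext.inj hext.closedRange).symm _
        = c • (ranEquiv i hext.inj hext.closedRange).symm _
      rw [← map_smul]
      congr 1
      refine Subtype.ext ?_
      show (c • y).1.2 - s ((c • y).1.1 0) = c • (y.1.2 - s (y.1.1 0))
      show c • y.1.2 - s (c • y.1.1 0) = _
      rw [map_smul, smul_sub]
    · refine ContinuousMap.ext fun u => ?_
      refine Subtype.ext (Prod.ext (ContinuousMap.ext fun τ => rfl) ?_)
      show (c • y).1.2 - s ((c • y).1.1 0) + s ((c • y).1.1 (unitInterval.symm u))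
        = c • (y.1.2 - s (y.1.1 0) + s (y.1.1 (unitInterval.symm u)))
      show c • y.1.2 - s (c • y.1.1 0) + s (c • y.1.1 (unitInterval.symm u)) = _
      rw [map_smul, map_smul, smul_add, smul_sub]
  · apply Continuous.subtype_mk
    refine Continuous.prodMk ?_ ?_
    · refine ((ranEquiv i hext.inj hext.closedRange).symm.continuous).comp ?_
      refine Continuous.subtype_mk ?_ _
      exact (continuous_snd.comp continuous_subtype_val).sub (s.continuous.comp
        (continuous_eval_cm (continuous_fst.comp continuous_subtype_val) continuous_const))
    · apply ContinuousMap.continuous_of_continuous_uncurry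
      apply Continuous.subtype_mk
      refine Continuous.prodMk ?_ ?_
      · apply ContinuousMap.continuous_of_continuous_uncurry
        show Continuous fun p : ((coneObj π).carrier × unitInterval) × unitInterval
          => p.1.1.1.1 (maxI p.2 (unitInterval.symm p.1.2))
        refine continuous_eval_cm ?_ ?_
        · exact continuous_fst.comp (continuous_subtype_val.comp
            (continuous_fst.comp continuous_fst))
        · exact continuous_maxI.comp (continuous_snd.prodMk
            (unitInterval.continuous_symm.comp (continuous_snd.comp continuous_fst)))
      · show Continuous fun p : (coneObj π).carrier × unitInterval
          => p.1.1.2 - s (p.1.1.1 0) + s (p.1.1.1 (unitInterval.symm p.2))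
        refine Continuous.add ?_ ?_
        · refine Continuous.sub ?_ ?_
          · exact continuous_snd.comp (continuous_subtype_val.comp continuous_fst)
          · exact s.continuous.comp (continuous_eval_cm
              (continuous_fst.comp (continuous_subtype_val.comp continuous_fst))
              continuous_const)
        · exact s.continuous.comp (continuous_eval_cm
            (continuous_fst.comp (continuous_subtype_val.comp continuous_fst))
            (unitInterval.continuous_symm.comp continuous_snd))

lemma sigmaX_section (s : A.carrier →L[ℂ] D.carrier) (hs : ∀ a, π.1 (s a) = a)
    (y : (coneObj π).carrier) :
    (pXmor i π hext).1 (sigmaX i π hext s hs y) = y := by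
  refine Subtype.ext (Prod.ext ?_ ?_)
  · refine ContinuousMap.ext fun τ => ?_
    show y.1.1 (maxI τ (unitInterval.symm 1)) = y.1.1 τ
    rw [unitInterval.symm_one, maxI_zero_right]
  · show y.1.2 - s (y.1.1 0) + s (y.1.1 (unitInterval.symm 1)) = y.1.2
    rw [unitInterval.symm_one]
    abel

lemma jV_range : Set.range (jV i π hext).1
    = {x : (XObj i π hext).carrier | x.1.2 1 = 0} := by
  ext x
  constructor
  · rintro ⟨v, rfl⟩
    exact v.2.2
  · intro hx
    exact ⟨⟨x.1, ⟨x.2, hx⟩⟩, Subtype.ext rfl⟩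

lemma pX_ext (hss : IsSemiSplit π) :
    IsExtensionHom (jV i π hext) (pXmor i π hext) where
  inj := fun v w h => Subtype.ext (congrArg (fun x => x.1) h)
  closedRange := by
    rw [jV_range]
    exact isClosed_eq (continuous_eval_cm
      (continuous_snd.comp continuous_subtype_val) continuous_const) continuous_const
  surj := by
    obtain ⟨s, hs⟩ := hss
    exact fun y => ⟨sigmaX i π hext s hs y, sigmaX_section i π hext s hs y⟩
  exact := by rw [jV_range]; rfl

lemma pX_ss (hss : IsSemiSplit π) : IsSemiSplit (pXmor i π hext) := by
  obtain ⟨s, hs⟩ := hss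
  exact ⟨sigmaX i π hext s hs, sigmaX_section i π hext s hs⟩

end PathExt

section VExt
open CategoryTheory

variable {B D A : BanAlg} (i : B ⟶ D) (π : D ⟶ A) (hext : IsExtensionHom i π)

/-- The inclusion `CB → V`, `β ↦ (β(0), κ∘β)`. -/
def jCB : coneAlg B ⟶ VObj i π hext := by
  have hmem : ∀ β : (coneAlg B).carrier,
      ((β.1 0, postcompHom (coneKappaHom i π hext).1 (coneKappaHom i π hext).2 β.1)
        ∈ cocSub i π hext) := by
    intro β
    constructor
    · rfl
    · show (coneKappaHom i π hext).1 (β.1 1) = 0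
      rw [coneAlg_apply_one (A := B) β, map_zero]
  refine ⟨{
    toFun := fun β => ⟨(β.1 0, postcompHom (coneKappaHom i π hext).1 (coneKappaHom i π hext).2 β.1),
      hmem β⟩,
    map_smul' := fun c β => ?_,
    map_zero' := ?_,
    map_add' := fun β β' => ?_,
    map_mul' := fun β β' => ?_ }, ?_⟩
  · exact Subtype.ext (Prod.ext rfl
      (map_smul (postcompHom (coneKappaHom i π hext).1 (coneKappaHom i π hext).2) c β.1))
  · exact Subtype.ext (Prod.ext rfl
      (map_zero (postcompHom (coneKappaHom i π hext).1 (coneKappaHom i π hext).2)))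
  · exact Subtype.ext (Prod.ext rfl (map_add (postcompHom _ _) β.1 β'.1))
  · exact Subtype.ext (Prod.ext rfl (map_mul (postcompHom _ _) β.1 β'.1))
  · refine Continuous.subtype_mk (Continuous.prodMk ?_ ?_) _
    · exact continuous_eval_cm continuous_subtype_val continuous_const
    · exact (ContinuousMap.continuous_postcomp _).comp continuous_subtype_val

/-- The quotient map `V → Σ(CA)`, `(b, x) ↦ q ∘ x`. -/
def qV : VObj i π hext ⟶ suspObj (coneAlg A) := by
  have hmem : ∀ v : (VObj i π hext).carrier,
      postcompHom (qCone π).1 (qCone π).2 v.1.2 ∈ suspAlg (coneAlg A).carrier := by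
    intro v
    refine mem_suspAlg_of ?_ ?_
    · show (qCone π).1 (v.1.2 0) = 0
      rw [v.2.1]
      exact Subtype.ext rfl
    · show (qCone π).1 (v.1.2 1) = 0
      rw [v.2.2, map_zero]
  refine ⟨{
    toFun := fun v => ⟨postcompHom (qCone π).1 (qCone π).2 v.1.2, hmem v⟩,
    map_smul' := fun c v => ?_,
    map_zero' := ?_,
    map_add' := fun v w => ?_,
    map_mul' := fun v w => ?_ }, ?_⟩
  · exact Subtype.ext (map_smul (postcompHom _ _) c v.1.2)
  · exact Subtype.ext (map_zero (postcompHom _ _))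
  · exact Subtype.ext (map_add (postcompHom _ _) v.1.2 w.1.2)
  · exact Subtype.ext (map_mul (postcompHom _ _) v.1.2 w.1.2)
  · refine Continuous.subtype_mk ?_ _
    exact (ContinuousMap.continuous_postcomp _).comp
      (continuous_snd.comp continuous_subtype_val)

lemma jCB_range : Set.range (jCB i π hext).1
    = {v : (VObj i π hext).carrier | ∀ t, (v.1.2 t).1.1 = 0} := by
  ext v
  constructor
  · rintro ⟨β, rfl⟩
    intro t
    rfl
  · intro hv
    have hdm : ∀ t : unitInterval, (v.1.2 t).1.2 ∈ LinearMap.range (toCLM i : B.carrier →ₗ[ℂ] D.carrier) := by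
      intro t
      apply mem_ran_of_mem_range
      rw [hext.exact]
      show π.1 (v.1.2 t).1.2 = 0
      rw [← (v.1.2 t).2.2, hv t]
      rfl
    set e := ranEquiv i hext.inj hext.closedRange with he
    have hcont : Continuous fun t => e.symm ⟨(v.1.2 t).1.2, hdm t⟩ := by
      refine (e.symm.continuous).comp (Continuous.subtype_mk ?_ _)
      exact continuous_snd.comp (continuous_subtype_val.comp (v.1.2).continuous)
    have hβ1 : (⟨fun t => e.symm ⟨(v.1.2 t).1.2, hdm t⟩, hcont⟩
        : C(unitInterval, B.carrier)) ∈ vanishAlg unitInterval B.carrier {1} := by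
      apply mem_coneAlg_of (A := B)
      show e.symm ⟨(v.1.2 1).1.2, hdm 1⟩ = 0
      have h1 : (⟨(v.1.2 1).1.2, hdm 1⟩ : ↥(LinearMap.range (toCLM i : B.carrier →ₗ[ℂ] D.carrier)))= 0 := by
        refine Subtype.ext ?_
        show (v.1.2 1).1.2 = 0
        rw [v.2.2]
        rfl
      rw [h1, map_zero]
    refine ⟨⟨_, hβ1⟩, ?_⟩
    have hκ : ∀ t, (coneKappaHom i π hext).1 (e.symm ⟨(v.1.2 t).1.2, hdm t⟩) = v.1.2 t := by
      intro t
      refine Subtype.ext (Prod.ext ?_ ?_)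
      · exact (hv t).symm
      · show i.1 (e.symm ⟨(v.1.2 t).1.2, hdm t⟩) = (v.1.2 t).1.2
        rw [he, i_ranEquiv_symm]
    refine Subtype.ext (Prod.ext ?_ ?_)
    · show e.symm ⟨(v.1.2 0).1.2, hdm 0⟩ = v.1.1
      apply kappa_inj i π hext
      rw [hκ 0, v.2.1]
    · exact ContinuousMap.ext fun t => hκ t

lemma jCBqV_ext (hss : IsSemiSplit π) :
    IsExtensionHom (jCB i π hext) (qV i π hext) where
  inj := by
    intro β β' h
    have h2 := congrArg (fun v => v.1.2) h
    refine Subtype.ext (ContinuousMap.ext fun t => ?_)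
    apply kappa_inj i π hext
    exact DFunLike.congr_fun h2 t
  closedRange := by
    rw [jCB_range]
    have h : {v : (VObj i π hext).carrier | ∀ t, (v.1.2 t).1.1 = 0}
        = ⋂ t : unitInterval, {v : (VObj i π hext).carrier | (v.1.2 t).1.1 = 0} := by
      ext v; simp [Set.mem_iInter]
    rw [h]
    apply isClosed_iInter
    intro t
    exact isClosed_eq ((continuous_fst.comp continuous_subtype_val).comp
      (continuous_eval_cm (continuous_snd.comp continuous_subtype_val) continuous_const))
      continuous_const
  surj := by
    obtain ⟨s, hs⟩ := hss
    intro f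
    have hf0 : (f.1 0).1 = (0 : C(unitInterval, A.carrier)) :=
      congrArg Subtype.val (susp_apply_zero f)
    have hf1 : (f.1 1).1 = (0 : C(unitInterval, A.carrier)) :=
      congrArg Subtype.val (susp_apply_one f)
    refine ⟨⟨((0 : B.carrier),
        ⟨fun u => ⟨((f.1 u).1, s ((f.1 u).1 0)), ⟨coneAlg_apply_one (f.1 u), (hs _).symm⟩⟩,
          Continuous.subtype_mk (Continuous.prodMk
            (continuous_subtype_val.comp (f.1).continuous)
            (s.continuous.comp (continuous_eval_cm
              (continuous_subtype_val.comp (f.1).continuous) continuous_const))) _⟩),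
      ⟨?_, ?_⟩⟩, ?_⟩
    · show (⟨((f.1 0).1, s ((f.1 0).1 0)), _⟩ : (coneObj π).carrier)
        = (coneKappaHom i π hext).1 0
      rw [map_zero (coneKappaHom i π hext).1]
      refine Subtype.ext (Prod.ext hf0 ?_)
      show s ((f.1 0).1 0) = 0
      rw [hf0]
      show s 0 = 0
      rw [map_zero]
    · show (⟨((f.1 1).1, s ((f.1 1).1 0)), _⟩ : (coneObj π).carrier) = 0
      refine Subtype.ext (Prod.ext hf1 ?_)
      show s ((f.1 1).1 0) = 0
      rw [hf1]
      show s 0 = 0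
      rw [map_zero]
    · exact Subtype.ext (ContinuousMap.ext fun u => Subtype.ext rfl)
  exact := by
    rw [jCB_range]
    ext v
    simp only [Set.mem_setOf_eq]
    constructor
    · intro hv
      refine Subtype.ext (ContinuousMap.ext fun t => Subtype.ext ?_)
      exact hv t
    · intro h t
      have h2 := congrArg Subtype.val (DFunLike.congr_fun (congrArg Subtype.val h) t)
      exact h2

lemma qV_ss (hss : IsSemiSplit π) : IsSemiSplit (qV i π hext) := by
  obtain ⟨s, hs⟩ := hss
  refine ⟨{
    toFun := fun f => ⟨((0 : B.carrier),
        ⟨fun u => ⟨((f.1 u).1, s ((f.1 u).1 0)), ⟨coneAlg_apply_one (f.1 u), (hs _).symm⟩⟩,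
          Continuous.subtype_mk (Continuous.prodMk
            (continuous_subtype_val.comp (f.1).continuous)
            (s.continuous.comp (continuous_eval_cm
              (continuous_subtype_val.comp (f.1).continuous) continuous_const))) _⟩),
      ⟨?_, ?_⟩⟩,
    map_add' := fun f g => ?_,
    map_smul' := fun c f => ?_,
    cont := ?_ }, fun f => Subtype.ext (ContinuousMap.ext fun u => Subtype.ext rfl)⟩
  · show (⟨((f.1 0).1, s ((f.1 0).1 0)), _⟩ : (coneObj π).carrier)
      = (coneKappaHom i π hext).1 0
    have hf0 : (f.1 0).1 = (0 : C(unitInterval, A.carrier)) :=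
      congrArg Subtype.val (susp_apply_zero f)
    rw [map_zero (coneKappaHom i π hext).1]
    refine Subtype.ext (Prod.ext hf0 ?_)
    show s ((f.1 0).1 0) = 0
    rw [hf0]
    show s 0 = 0
    rw [map_zero]
  · show (⟨((f.1 1).1, s ((f.1 1).1 0)), _⟩ : (coneObj π).carrier) = 0
    have hf1 : (f.1 1).1 = (0 : C(unitInterval, A.carrier)) :=
      congrArg Subtype.val (susp_apply_one f)
    refine Subtype.ext (Prod.ext hf1 ?_)
    show s ((f.1 1).1 0) = 0
    rw [hf1]
    show s 0 = 0
    rw [map_zero]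
  · refine Subtype.ext (Prod.ext (add_zero (0 : B.carrier)).symm
      (ContinuousMap.ext fun u => Subtype.ext (Prod.ext rfl ?_)))
    show s (((f + g).1 u).1 0) = s ((f.1 u).1 0) + s ((g.1 u).1 0)
    show s ((f.1 u).1 0 + (g.1 u).1 0) = _
    rw [map_add]
  · refine Subtype.ext (Prod.ext (smul_zero c).symm
      (ContinuousMap.ext fun u => Subtype.ext (Prod.ext rfl ?_)))
    show s (((c • f).1 u).1 0) = c • s ((f.1 u).1 0)
    show s (c • ((f.1 u).1 0)) = _
    rw [map_smul]
  · apply Continuous.subtype_mk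
    refine Continuous.prodMk continuous_const ?_
    apply ContinuousMap.continuous_of_continuous_uncurry
    apply Continuous.subtype_mk
    refine Continuous.prodMk ?_ ?_
    · show Continuous fun p : (suspObj (coneAlg A)).carrier × unitInterval => (p.1.1 p.2).1
      exact continuous_subtype_val.comp
        (continuous_eval_cm (continuous_subtype_val.comp continuous_fst :
          Continuous fun p : (suspObj (coneAlg A)).carrier × unitInterval => p.1.1) continuous_snd)
    · show Continuous fun p : (suspObj (coneAlg A)).carrier × unitInterval
        => s ((p.1.1 p.2).1 0)
      refine s.continuous.comp (continuous_eval_cm ?_ continuous_const)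
      exact continuous_subtype_val.comp
        (continuous_eval_cm (continuous_subtype_val.comp continuous_fst :
          Continuous fun p : (suspObj (coneAlg A)).carrier × unitInterval => p.1.1) continuous_snd)

end VExt

section SuspExt
open CategoryTheory

variable {B D A : BanAlg} (i : B ⟶ D) (π : D ⟶ A) (hext : IsExtensionHom i π)

include hext in
lemma suspHom_range : Set.range (suspHom i).1
    = {f : (suspObj D).carrier | ∀ t, f.1 t ∈ Set.range i.1} := by
  ext f
  constructor
  · rintro ⟨g, rfl⟩
    exact fun t => ⟨g.1 t, rfl⟩
  · intro h
    set e := ranEquiv i hext.inj hext.closedRange with he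
    have hcont : Continuous fun t => e.symm ⟨f.1 t, mem_ran_of_mem_range i (h t)⟩ :=
      e.symm.continuous.comp (Continuous.subtype_mk (f.1).continuous _)
    have hval : ∀ t, i.1 (e.symm ⟨f.1 t, mem_ran_of_mem_range i (h t)⟩) = f.1 t := by
      intro t
      rw [he, i_ranEquiv_symm]
    have hmem : (⟨fun t => e.symm ⟨f.1 t, mem_ran_of_mem_range i (h t)⟩, hcont⟩
        : C(unitInterval, B.carrier)) ∈ suspAlg B.carrier := by
      refine mem_suspAlg_of ?_ ?_
      · apply hext.inj
        show i.1 (e.symm ⟨f.1 0, mem_ran_of_mem_range i (h 0)⟩) = i.1 0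
        rw [hval 0, susp_apply_zero f, map_zero]
      · apply hext.inj
        show i.1 (e.symm ⟨f.1 1, mem_ran_of_mem_range i (h 1)⟩) = i.1 0
        rw [hval 1, susp_apply_one f, map_zero]
    exact ⟨⟨_, hmem⟩, Subtype.ext (ContinuousMap.ext fun t => hval t)⟩

include hext in
lemma susp_ext (hss : IsSemiSplit π) : IsExtensionHom (suspHom i) (suspHom π) where
  inj := by
    intro f g h
    refine Subtype.ext (ContinuousMap.ext fun t => hext.inj ?_)
    exact DFunLike.congr_fun (congrArg Subtype.val h) t
  closedRange := by
    rw [suspHom_range i π hext]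
    have h : {f : (suspObj D).carrier | ∀ t, f.1 t ∈ Set.range i.1}
        = ⋂ t : unitInterval, {f : (suspObj D).carrier | f.1 t ∈ Set.range i.1} := by
      ext f; simp [Set.mem_iInter]
    rw [h]
    refine isClosed_iInter fun t => ?_
    exact hext.closedRange.preimage
      (continuous_eval_cm (continuous_subtype_val) continuous_const)
  surj := by
    obtain ⟨s, hs⟩ := hss
    intro f
    refine ⟨⟨⟨fun t => s (f.1 t), s.continuous.comp (f.1).continuous⟩,
      mem_suspAlg_of (by show s (f.1 0) = 0; rw [susp_apply_zero f, map_zero])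
        (by show s (f.1 1) = 0; rw [susp_apply_one f, map_zero])⟩, ?_⟩
    exact Subtype.ext (ContinuousMap.ext fun t => hs (f.1 t))
  exact := by
    rw [suspHom_range i π hext]
    ext f
    simp only [Set.mem_setOf_eq]
    constructor
    · intro h
      refine Subtype.ext (ContinuousMap.ext fun t => ?_)
      have := h t
      rw [hext.exact] at this
      exact this
    · intro h t
      rw [hext.exact]
      exact DFunLike.congr_fun (congrArg Subtype.val h) t

lemma susp_ss (hss : IsSemiSplit π) : IsSemiSplit (suspHom π) := by
  obtain ⟨s, hs⟩ := hss
  refine ⟨{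
    toFun := fun f => ⟨⟨fun t => s (f.1 t), s.continuous.comp (f.1).continuous⟩,
      mem_suspAlg_of (by show s (f.1 0) = 0; rw [susp_apply_zero f, map_zero])
        (by show s (f.1 1) = 0; rw [susp_apply_one f, map_zero])⟩,
    map_add' := fun f g => ?_,
    map_smul' := fun c f => ?_,
    cont := ?_ }, fun f => Subtype.ext (ContinuousMap.ext fun t => hs (f.1 t))⟩
  · refine Subtype.ext (ContinuousMap.ext fun t => ?_)
    show s ((f + g).1 t) = s (f.1 t) + s (g.1 t)
    show s (f.1 t + g.1 t) = _
    rw [map_add]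
  · refine Subtype.ext (ContinuousMap.ext fun t => ?_)
    show s ((c • f).1 t) = c • s (f.1 t)
    show s (c • f.1 t) = _
    rw [map_smul]
  · refine Continuous.subtype_mk ?_ _
    apply ContinuousMap.continuous_of_continuous_uncurry
    show Continuous fun p : (suspObj A).carrier × unitInterval => s (p.1.1 p.2)
    exact s.continuous.comp (continuous_eval_cm
      (continuous_subtype_val.comp continuous_fst) continuous_snd)


end SuspExt

section Excision
open CategoryTheory

variable {𝒜 : Type*} [Category 𝒜] [Abelian 𝒜]

lemma excision (F : BanAlg ⥤ 𝒜) (hhtp : HomotopyInvariant F)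
    (hhe : ∀ (B D A : BanAlg) (i : B ⟶ D) (π : D ⟶ A), IsExtensionHom i π → IsSemiSplit π →
      ∃ w : F.map i ≫ F.map π = 0, (ShortComplex.mk (F.map i) (F.map π) w).Exact)
    {B D A : BanAlg} (i : B ⟶ D) (π : D ⟶ A) (hext : IsExtensionHom i π)
    (hss : IsSemiSplit π) :
    IsIso (F.map (coneKappaHom i π hext)) := by
  have hCA : 𝟙 (F.obj (coneAlg A)) = 0 := (coneAlg_contractible A).F_id_zero F hhtp hhe
  have hCB : 𝟙 (F.obj (coneAlg B)) = 0 := (coneAlg_contractible B).F_id_zero F hhtp hhe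
  have hSCA : 𝟙 (F.obj (suspObj (coneAlg A))) = 0 :=
    (susp_contractible (coneAlg_contractible A)).F_id_zero F hhtp hhe
  -- epi
  obtain ⟨w1, e1⟩ := hhe _ _ _ (coneKappaHom i π hext) (qCone π)
    (kappaq_ext i π hext hss) (qCone_ss π hss)
  have hq0 : F.map (qCone π) = 0 := comp_right_zero_of_id_zero hCA _
  have hepi : Epi (F.map (coneKappaHom i π hext)) := e1.epi_f hq0
  -- F(V) has zero identity
  obtain ⟨w2, e2⟩ := hhe _ _ _ (jCB i π hext) (qV i π hext)
    (jCBqV_ext i π hext hss) (qV_ss i π hext hss)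
  have hjCB0 : F.map (jCB i π hext) = 0 := comp_left_zero_of_id_zero hCB _
  have hmonoqV : Mono (F.map (qV i π hext)) := e2.mono_g hjCB0
  have hVid : 𝟙 (F.obj (VObj i π hext)) = 0 := by
    have h1 : F.map (qV i π hext) = 0 := comp_right_zero_of_id_zero hSCA _
    rw [← cancel_mono (F.map (qV i π hext)), Category.id_comp, h1, Limits.zero_comp]
  -- mono
  obtain ⟨w3, e3⟩ := hhe _ _ _ (jV i π hext) (pXmor i π hext)
    (pX_ext i π hext hss) (pX_ss i π hext hss)
  have hjV0 : F.map (jV i π hext) = 0 := comp_left_zero_of_id_zero hVid _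
  have hmonopX : Mono (F.map (pXmor i π hext)) := e3.mono_g hjV0
  have hrXeB : F.map (rX i π hext) ≫ F.map (eB i π hext) = 𝟙 _ := by
    have h := hhtp _ _ (𝟙 (XObj i π hext)) (rX i π hext ≫ eB i π hext)
      (pathspace_homotopy i π hext)
    rw [F.map_id, F.map_comp] at h
    exact h.symm
  have heBrX : F.map (eB i π hext) ≫ F.map (rX i π hext) = 𝟙 _ := by
    rw [← F.map_comp, eB_rX, F.map_id]
  have hiso_eB : IsIso (F.map (eB i π hext)) := ⟨F.map (rX i π hext), heBrX, hrXeB⟩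
  have hfact : F.map (coneKappaHom i π hext)
      = F.map (eB i π hext) ≫ F.map (pXmor i π hext) := by
    rw [← F.map_comp, eB_pX]
  have hmono : Mono (F.map (coneKappaHom i π hext)) := by
    haveI := hiso_eB
    haveI := hmonopX
    rw [hfact]
    exact mono_comp _ _
  haveI := hmono
  haveI := hepi
  exact isIso_of_mono_of_epi _

end Excision

section Rotation
open CategoryTheory

/-- Reparametrization endomorphism of a suspension. -/
def reparamSuspHom (W : BanAlg) (φ : C(unitInterval, unitInterval))
    (h0 : φ 0 = 0 ∨ φ 0 = 1) (h1 : φ 1 = 0 ∨ φ 1 = 1) : suspObj W ⟶ suspObj W := by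
  have hmem : ∀ f : (suspObj W).carrier, (f.1).comp φ ∈ suspAlg W.carrier := by
    intro f
    refine mem_suspAlg_of ?_ ?_
    · show f.1 (φ 0) = 0
      rcases h0 with h | h <;> rw [h]
      · exact susp_apply_zero f
      · exact susp_apply_one f
    · show f.1 (φ 1) = 0
      rcases h1 with h | h <;> rw [h]
      · exact susp_apply_zero f
      · exact susp_apply_one f
  exact ⟨{
    toFun := fun f => ⟨(f.1).comp φ, hmem f⟩,
    map_smul' := fun c f => Subtype.ext (map_smul (precompHom (R := W.carrier) φ) c f.1),
    map_zero' := Subtype.ext (map_zero (precompHom (R := W.carrier) φ)),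
    map_add' := fun f g => Subtype.ext (map_add (precompHom (R := W.carrier) φ) f.1 g.1),
    map_mul' := fun f g => Subtype.ext (map_mul (precompHom (R := W.carrier) φ) f.1 g.1) },
    Continuous.subtype_mk ((ContinuousMap.continuous_precomp φ).comp continuous_subtype_val) _⟩

@[simp] lemma reparamSuspHom_val (W : BanAlg) (φ : C(unitInterval, unitInterval))
    (h0 : φ 0 = 0 ∨ φ 0 = 1) (h1 : φ 1 = 0 ∨ φ 1 = 1) (f : (suspObj W).carrier)
    (t : unitInterval) : ((reparamSuspHom W φ h0 h1).1 f).1 t = f.1 (φ t) := rfl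

/-- Reparametrizations with common endpoints give homotopic endomorphisms. -/
lemma reparamSuspHom_homotopic (W : BanAlg) (φ ψ : C(unitInterval, unitInterval))
    (h0 : φ 0 = 0 ∨ φ 0 = 1) (h1 : φ 1 = 0 ∨ φ 1 = 1)
    (g0 : ψ 0 = 0 ∨ ψ 0 = 1) (g1 : ψ 1 = 0 ∨ ψ 1 = 1)
    (k0 : ψ 0 = φ 0) (k1 : ψ 1 = φ 1) :
    NAlgHomotopic (reparamSuspHom W φ h0 h1).1
      (reparamSuspHom W ψ g0 g1).1 := by
  set χ : C(unitInterval × unitInterval, unitInterval) :=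
    ⟨fun p => clampI ((1 - (p.1 : ℝ)) * ((φ p.2 : ℝ)) + (p.1 : ℝ) * ((ψ p.2 : ℝ))),
      continuous_clampI.comp ((((continuous_const.sub
        (continuous_subtype_val.comp continuous_fst)).mul
        (continuous_subtype_val.comp (φ.continuous.comp continuous_snd))).add
        ((continuous_subtype_val.comp continuous_fst).mul
        (continuous_subtype_val.comp (ψ.continuous.comp continuous_snd)))))⟩ with hχ
  have hconv : ∀ (u : unitInterval) (a : unitInterval),
      clampI ((1 - (u : ℝ)) * (a : ℝ) + (u : ℝ) * (a : ℝ)) = a := by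
    intro u a
    have : (1 - (u : ℝ)) * (a : ℝ) + (u : ℝ) * (a : ℝ) = (a : ℝ) := by ring
    rw [this, clampI_coe]
  have hχ0 : ∀ u, χ (u, 0) = φ 0 := by
    intro u
    show clampI ((1 - (u : ℝ)) * ((φ 0 : ℝ)) + (u : ℝ) * ((ψ 0 : ℝ))) = φ 0
    rw [k0]
    exact hconv u (φ 0)
  have hχ1 : ∀ u, χ (u, 1) = φ 1 := by
    intro u
    show clampI ((1 - (u : ℝ)) * ((φ 1 : ℝ)) + (u : ℝ) * ((ψ 1 : ℝ))) = φ 1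
    rw [k1]
    exact hconv u (φ 1)
  have hend : ∀ (f : (suspObj W).carrier) (v : unitInterval), v = 0 ∨ v = 1 → f.1 v = 0 := by
    intro f v hv
    rcases hv with h | h <;> rw [h]
    · exact susp_apply_zero f
    · exact susp_apply_one f
  refine ⟨cmCodRestrict (suspAlg W.carrier)
      ((reparamHom χ).comp (NonUnitalSubalgebraClass.subtype (suspAlg W.carrier)))
      (fun f u => ?_), ?_, ?_, ?_⟩
  · refine mem_suspAlg_of ?_ ?_
    · show f.1 (χ (u, 0)) = 0
      rw [hχ0]
      exact hend f _ h0
    · show f.1 (χ (u, 1)) = 0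
      rw [hχ1]
      exact hend f _ h1
  · exact continuous_cmCodRestrict _ _ _
      ((continuous_reparamHom χ).comp continuous_subtype_val)
  · intro f
    refine Subtype.ext (ContinuousMap.ext fun t => ?_)
    show f.1 (χ (0, t)) = f.1 (φ t)
    congr 1
    show clampI ((1 - (0 : ℝ)) * ((φ t : ℝ)) + (0 : ℝ) * ((ψ t : ℝ))) = φ t
    rw [show (1 - (0:ℝ)) * ((φ t : ℝ)) + (0:ℝ) * ((ψ t : ℝ)) = (φ t : ℝ) by ring, clampI_coe]
  · intro f
    refine Subtype.ext (ContinuousMap.ext fun t => ?_)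
    show f.1 (χ (1, t)) = f.1 (ψ t)
    congr 1
    show clampI ((1 - (1 : ℝ)) * ((φ t : ℝ)) + (1 : ℝ) * ((ψ t : ℝ))) = ψ t
    rw [show (1 - (1:ℝ)) * ((φ t : ℝ)) + (1:ℝ) * ((ψ t : ℝ)) = (ψ t : ℝ) by ring, clampI_coe]

/-- The reversal-with-doubling reparametrization `t ↦ max(0, 1 - 2t)`. -/
noncomputable def rhoCM : C(unitInterval, unitInterval) :=
  ⟨fun t => clampI (1 - (1 + (1:ℝ)) * (t : ℝ)),
    continuous_clampI.comp (continuous_const.sub (continuous_const.mul continuous_subtype_val))⟩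

lemma rhoCM_zero : rhoCM 0 = 1 := by
  show clampI (1 - (1 + (1:ℝ)) * ((0 : unitInterval) : ℝ)) = 1
  rw [show ((0 : unitInterval) : ℝ) = 0 from rfl, mul_zero, sub_zero]
  exact clampI_of_one_le le_rfl

lemma rhoCM_one : rhoCM 1 = 0 := by
  show clampI (1 - (1 + (1:ℝ)) * ((1 : unitInterval) : ℝ)) = 0
  rw [show ((1 : unitInterval) : ℝ) = 1 from rfl, mul_one]
  exact clampI_of_nonpos (by norm_num)

/-- The reversal endomorphism of `ΣW`. -/
noncomputable def RHom (W : BanAlg) : suspObj W ⟶ suspObj W :=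
  reparamSuspHom W rhoCM (Or.inr rhoCM_zero) (Or.inl rhoCM_one)

lemma RHom_RHom_eq (W : BanAlg) :
    RHom W ≫ RHom W = reparamSuspHom W (rhoCM.comp rhoCM)
      (Or.inl (by rw [ContinuousMap.comp_apply, rhoCM_zero, rhoCM_one]))
      (Or.inr (by rw [ContinuousMap.comp_apply, rhoCM_one, rhoCM_zero])) :=
  BanAlg.hom_ext fun f => Subtype.ext (ContinuousMap.ext fun t => rfl)

lemma reparamSuspHom_id (W : BanAlg) :
    reparamSuspHom W (ContinuousMap.id unitInterval) (Or.inl rfl) (Or.inr rfl)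
      = 𝟙 (suspObj W) :=
  BanAlg.hom_ext fun f => Subtype.ext (ContinuousMap.comp_id f.1)

end Rotation

section BigRotation
open CategoryTheory

/-- The rotation reparametrization `(u, t) ↦ max(0, u - (1+u)t)`. -/
noncomputable def rotCM : C(unitInterval × unitInterval, unitInterval) :=
  ⟨fun p => clampI ((p.1 : ℝ) - (1 + (p.1 : ℝ)) * (p.2 : ℝ)),
    continuous_clampI.comp ((continuous_subtype_val.comp continuous_fst).sub
      ((continuous_const.add (continuous_subtype_val.comp continuous_fst)).mul
        (continuous_subtype_val.comp continuous_snd)))⟩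

lemma rotCM_u0 (u : unitInterval) : rotCM (u, 0) = u := by
  show clampI ((u : ℝ) - (1 + (u : ℝ)) * ((0 : unitInterval) : ℝ)) = u
  rw [show ((0 : unitInterval) : ℝ) = 0 from rfl, mul_zero, sub_zero, clampI_coe]

lemma rotCM_u1 (u : unitInterval) : rotCM (u, 1) = 0 := by
  show clampI ((u : ℝ) - (1 + (u : ℝ)) * ((1 : unitInterval) : ℝ)) = 0
  rw [show ((1 : unitInterval) : ℝ) = 1 from rfl, mul_one]
  exact clampI_of_nonpos (by linarith)

lemma rotCM_0t (t : unitInterval) : rotCM (0, t) = 0 := by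
  show clampI (((0 : unitInterval) : ℝ) - (1 + ((0 : unitInterval) : ℝ)) * (t : ℝ)) = 0
  rw [show ((0 : unitInterval) : ℝ) = 0 from rfl]
  refine clampI_of_nonpos ?_
  have := t.2.1
  nlinarith

lemma rotCM_1t (t : unitInterval) : rotCM (1, t) = rhoCM t := by
  show clampI (((1 : unitInterval) : ℝ) - (1 + ((1 : unitInterval) : ℝ)) * (t : ℝ))
    = clampI (1 - (1 + (1:ℝ)) * (t : ℝ))
  rfl

lemma shiftCM_snd_zero' (u : unitInterval) : shiftCM (u, 0) = u := by
  show clampI ((u : ℝ) + ((0 : unitInterval) : ℝ)) = u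
  rw [show ((0 : unitInterval) : ℝ) = 0 from rfl, add_zero, clampI_coe]

variable {D A : BanAlg} (π : D ⟶ A)

/-- The rotation homotopy: `ι(ε) ≃ κ(ε) ∘ Σπ ∘ ρ` as maps `ΣD → C_ε`. -/
lemma rotation_homotopy :
    NAlgHomotopic (coneIotaHom (epsHom π)).1
      (RHom D ≫ suspHom π ≫ coneKappaHom (coneIotaHom π) (epsHom π) (cone_ext π)).1 := by
  have hcP : ∀ (g : (suspObj D).carrier) (u : unitInterval),
      Continuous fun t => g.1 (shiftCM (u, t)) :=
    fun g u => (g.1).continuous.comp (shiftCM.continuous.comp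
      (continuous_const.prodMk continuous_id))
  have hfP : ∀ (g : (suspObj D).carrier) (u : unitInterval),
      Continuous fun t => π.1 (g.1 (rotCM (u, t))) :=
    fun g u => π.2.comp ((g.1).continuous.comp (rotCM.continuous.comp
      (continuous_const.prodMk continuous_id)))
  have hinner : ∀ (g : (suspObj D).carrier) (u : unitInterval),
      ((⟨fun t => π.1 (g.1 (rotCM (u, t))), hfP g u⟩ : C(unitInterval, A.carrier)), g.1 u)
        ∈ mappingCone π.1 := by
    intro g u
    constructor
    · show π.1 (g.1 (rotCM (u, 1))) = 0
      rw [rotCM_u1, susp_apply_zero g, map_zero]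
    · show π.1 (g.1 (rotCM (u, 0))) = π.1 (g.1 u)
      rw [rotCM_u0]
  have houter : ∀ (g : (suspObj D).carrier) (u : unitInterval),
      ((⟨fun t => g.1 (shiftCM (u, t)), hcP g u⟩ : C(unitInterval, D.carrier)),
        (⟨(⟨fun t => π.1 (g.1 (rotCM (u, t))), hfP g u⟩, g.1 u), hinner g u⟩
          : (coneObj π).carrier)) ∈ mappingCone (epsHom π).1 := by
    intro g u
    constructor
    · show g.1 (shiftCM (u, 1)) = 0
      rw [shiftCM_snd_one, susp_apply_one g]
    · show g.1 (shiftCM (u, 0)) = g.1 u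
      rw [shiftCM_snd_zero']
  have hHg : ∀ g : (suspObj D).carrier,
      Continuous fun u : unitInterval =>
        (⟨((⟨fun t => g.1 (shiftCM (u, t)), hcP g u⟩ : C(unitInterval, D.carrier)),
          (⟨(⟨fun t => π.1 (g.1 (rotCM (u, t))), hfP g u⟩, g.1 u), hinner g u⟩
            : (coneObj π).carrier)), houter g u⟩
          : (coneObj (epsHom π)).carrier) := by
    intro g
    apply Continuous.subtype_mk
    refine Continuous.prodMk ?_ ?_
    · apply ContinuousMap.continuous_of_continuous_uncurry
      show Continuous fun p : unitInterval × unitInterval => g.1 (shiftCM (p.1, p.2))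
      exact (g.1).continuous.comp (shiftCM.continuous.comp
        (continuous_fst.prodMk continuous_snd))
    · apply Continuous.subtype_mk
      refine Continuous.prodMk ?_ ((g.1).continuous)
      apply ContinuousMap.continuous_of_continuous_uncurry
      show Continuous fun p : unitInterval × unitInterval => π.1 (g.1 (rotCM (p.1, p.2)))
      exact π.2.comp ((g.1).continuous.comp (rotCM.continuous.comp
        (continuous_fst.prodMk continuous_snd)))
  refine ⟨{
    toFun := fun g => ⟨_, hHg g⟩,
    map_smul' := fun c g => ?_,
    map_zero' := ?_,
    map_add' := fun g g' => ?_,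
    map_mul' := fun g g' => ?_ }, ?_, ?_, ?_⟩
  · ext u
    refine Subtype.ext (Prod.ext (ContinuousMap.ext fun t => rfl) ?_)
    refine Subtype.ext (Prod.ext (ContinuousMap.ext fun t => ?_) rfl)
    show π.1 ((c • g).1 (rotCM (u, t))) = c • π.1 (g.1 (rotCM (u, t)))
    rw [show (c • g).1 (rotCM (u, t)) = c • (g.1 (rotCM (u, t))) from rfl, map_smul]
  · ext u
    refine Subtype.ext (Prod.ext (ContinuousMap.ext fun t => rfl) ?_)
    refine Subtype.ext (Prod.ext (ContinuousMap.ext fun t => ?_) rfl)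
    show π.1 ((0 : (suspObj D).carrier).1 (rotCM (u, t))) = 0
    rw [show (0 : (suspObj D).carrier).1 (rotCM (u, t)) = 0 from rfl, map_zero]
  · ext u
    refine Subtype.ext (Prod.ext (ContinuousMap.ext fun t => rfl) ?_)
    refine Subtype.ext (Prod.ext (ContinuousMap.ext fun t => ?_) rfl)
    show π.1 ((g + g').1 (rotCM (u, t)))
      = π.1 (g.1 (rotCM (u, t))) + π.1 (g'.1 (rotCM (u, t)))
    rw [show (g + g').1 (rotCM (u, t)) = g.1 (rotCM (u, t)) + g'.1 (rotCM (u, t)) from rfl,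
      map_add]
  · ext u
    refine Subtype.ext (Prod.ext (ContinuousMap.ext fun t => rfl) ?_)
    refine Subtype.ext (Prod.ext (ContinuousMap.ext fun t => ?_) rfl)
    show π.1 ((g * g').1 (rotCM (u, t)))
      = π.1 (g.1 (rotCM (u, t))) * π.1 (g'.1 (rotCM (u, t)))
    rw [show (g * g').1 (rotCM (u, t)) = g.1 (rotCM (u, t)) * g'.1 (rotCM (u, t)) from rfl,
      map_mul]
  · apply ContinuousMap.continuous_of_continuous_uncurry
    apply Continuous.subtype_mk
    refine Continuous.prodMk ?_ ?_
    · apply ContinuousMap.continuous_of_continuous_uncurry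
      show Continuous fun p : ((suspObj D).carrier × unitInterval) × unitInterval
        => p.1.1.1 (shiftCM (p.1.2, p.2))
      refine continuous_eval_cm
        (continuous_subtype_val.comp (continuous_fst.comp continuous_fst)) ?_
      exact shiftCM.continuous.comp ((continuous_snd.comp continuous_fst).prodMk
        continuous_snd)
    · apply Continuous.subtype_mk
      refine Continuous.prodMk ?_ ?_
      · apply ContinuousMap.continuous_of_continuous_uncurry
        show Continuous fun p : (((suspObj D).carrier × unitInterval)) × unitInterval
          => π.1 (p.1.1.1 (rotCM (p.1.2, p.2)))
        refine π.2.comp (continuous_eval_cm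
          (continuous_subtype_val.comp (continuous_fst.comp continuous_fst)) ?_)
        exact rotCM.continuous.comp ((continuous_snd.comp continuous_fst).prodMk
          continuous_snd)
      · show Continuous fun p : (suspObj D).carrier × unitInterval => p.1.1 p.2
        exact continuous_eval_cm (continuous_subtype_val.comp continuous_fst) continuous_snd
  · intro g
    refine Subtype.ext (Prod.ext (ContinuousMap.ext fun t => ?_) ?_)
    · show g.1 (shiftCM (0, t)) = g.1 t
      rw [shiftCM_zero]
    · refine Subtype.ext (Prod.ext (ContinuousMap.ext fun t => ?_) ?_)
      · show π.1 (g.1 (rotCM (0, t))) = 0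
        rw [rotCM_0t, susp_apply_zero g, map_zero]
      · exact susp_apply_zero g
  · intro g
    refine Subtype.ext (Prod.ext (ContinuousMap.ext fun t => ?_) ?_)
    · show g.1 (shiftCM (1, t)) = 0
      rw [shiftCM_one, susp_apply_one g]
    · refine Subtype.ext (Prod.ext (ContinuousMap.ext fun t => ?_) ?_)
      · show π.1 (g.1 (rotCM (1, t))) = π.1 (g.1 (rhoCM t))
        rw [rotCM_1t]
      · exact susp_apply_one g

end BigRotation

end LESAux

/-!
STATEMENT 16 (Long exact sequence).  Let `F` be a homotopy invariant functor from `BanAlg`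
into an abelian category which is half-exact for semi-split extensions (for every semi-split
extension `B ↣ D ↠ A`, the sequence `F(B) → F(D) → F(A)` is exact at `F(D)`).  Then for
every semi-split extension `B ↣ᶦ D ↠^π A`, with `κ_π : B → C_π` (an isomorphism under `F`)
and `ι(π) : ΣA → C_π`, and with connecting morphism `∂ = F(κ_π)⁻¹ ∘ F(ι(π))`, the sequence
`F(ΣB) → F(ΣD) → F(ΣA) →^∂ F(B) → F(D) → F(A)` is exact.
-/
theorem long_exact_sequence_of_halfexact
    {𝒜 : Type*} [Category 𝒜] [Abelian 𝒜]
    (F : BanAlg ⥤ 𝒜)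
    (hhtp : HomotopyInvariant F)
    (hhe : ∀ (B D A : BanAlg) (i : B ⟶ D) (π : D ⟶ A), IsExtensionHom i π → IsSemiSplit π →
      ∃ w : F.map i ≫ F.map π = 0, (ShortComplex.mk (F.map i) (F.map π) w).Exact)
    (B D A : BanAlg) (i : B ⟶ D) (π : D ⟶ A)
    (hext : IsExtensionHom i π) (hss : IsSemiSplit π) :
    ∃ hκ : IsIso (F.map (coneKappaHom i π hext)),
      ∃ (w₁ : F.map (suspHom i) ≫ F.map (suspHom π) = 0)
        (w₂ : F.map (suspHom π) ≫
          (F.map (coneIotaHom π) ≫ @inv _ _ _ _ (F.map (coneKappaHom i π hext)) hκ) = 0)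
        (w₃ : (F.map (coneIotaHom π) ≫ @inv _ _ _ _ (F.map (coneKappaHom i π hext)) hκ) ≫
          F.map i = 0)
        (w₄ : F.map i ≫ F.map π = 0),
        (ShortComplex.mk _ _ w₁).Exact ∧ (ShortComplex.mk _ _ w₂).Exact ∧
        (ShortComplex.mk _ _ w₃).Exact ∧ (ShortComplex.mk _ _ w₄).Exact := by
  
  have hκ : IsIso (F.map (coneKappaHom i π hext)) := excision F hhtp hhe i π hext hss
  obtain ⟨w4, ex4⟩ := hhe B D A i π hext hss
  obtain ⟨w1, ex1⟩ := hhe _ _ _ (suspHom i) (suspHom π) (susp_ext i π hext hss) (susp_ss π hss)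
  obtain ⟨wE1, exE1⟩ := hhe _ _ _ (coneIotaHom π) (epsHom π) (cone_ext π) (cone_ss π)
  obtain ⟨wE2, exE2⟩ := hhe _ _ _ (coneIotaHom (epsHom π)) (epsHom (epsHom π))
    (cone_ext (epsHom π)) (cone_ss (epsHom π))
  have hκ1 : IsIso (F.map (coneKappaHom (coneIotaHom π) (epsHom π) (cone_ext π))) :=
    excision F hhtp hhe _ _ (cone_ext π) (cone_ss π)
  have hi_fact : F.map i = F.map (coneKappaHom i π hext) ≫ F.map (epsHom π) := by
    rw [← F.map_comp, kappa_comp_eps]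
  have hι_fact : F.map (coneIotaHom π)
      = F.map (coneKappaHom (coneIotaHom π) (epsHom π) (cone_ext π))
        ≫ F.map (epsHom (epsHom π)) := by
    rw [← F.map_comp, kappa_comp_eps]
  have hφ0 : (rhoCM.comp rhoCM) 0 = 0 := by
    rw [ContinuousMap.comp_apply, rhoCM_zero, rhoCM_one]
  have hφ1 : (rhoCM.comp rhoCM) 1 = 1 := by
    rw [ContinuousMap.comp_apply, rhoCM_one, rhoCM_zero]
  have hRR : F.map (RHom D) ≫ F.map (RHom D) = 𝟙 _ := by
    rw [← F.map_comp, RHom_RHom_eq]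
    have h2 := reparamSuspHom_homotopic D (rhoCM.comp rhoCM) (ContinuousMap.id unitInterval)
      (Or.inl hφ0) (Or.inr hφ1) (Or.inl rfl) (Or.inr rfl)
      (by rw [hφ0]; rfl) (by rw [hφ1]; rfl)
    have h3 := hhtp _ _ _ _ h2
    rw [reparamSuspHom_id, F.map_id] at h3
    calc F.map (reparamSuspHom D (rhoCM.comp rhoCM)
          (Or.inl (by rw [ContinuousMap.comp_apply, rhoCM_zero, rhoCM_one]))
          (Or.inr (by rw [ContinuousMap.comp_apply, rhoCM_one, rhoCM_zero])))
        = F.map (reparamSuspHom D (rhoCM.comp rhoCM) (Or.inl hφ0) (Or.inr hφ1)) := rfl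
      _ = 𝟙 _ := h3
  haveI hRiso : IsIso (F.map (RHom D)) := ⟨F.map (RHom D), hRR, hRR⟩
  have hrot : F.map (coneIotaHom (epsHom π))
      = F.map (RHom D) ≫ F.map (suspHom π)
        ≫ F.map (coneKappaHom (coneIotaHom π) (epsHom π) (cone_ext π)) := by
    have h := hhtp _ _ _ _ (rotation_homotopy π)
    rw [h, F.map_comp, F.map_comp]
  have hcomp : F.map (suspHom π)
      ≫ F.map (coneKappaHom (coneIotaHom π) (epsHom π) (cone_ext π))
      = F.map (RHom D) ≫ F.map (coneIotaHom (epsHom π)) := by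
    rw [hrot, ← Category.assoc, hRR, Category.id_comp]
  haveI := hκ
  haveI := hκ1
  have w3 : (F.map (coneIotaHom π) ≫ inv (F.map (coneKappaHom i π hext))) ≫ F.map i = 0 := by
    rw [hi_fact, Category.assoc, IsIso.inv_hom_id_assoc]
    exact wE1
  have hz : F.map (coneIotaHom (epsHom π)) ≫ F.map (epsHom (epsHom π))
      ≫ inv (F.map (coneKappaHom i π hext)) = 0 := by
    rw [← Category.assoc, wE2, Limits.zero_comp]
  have w2 : F.map (suspHom π) ≫ (F.map (coneIotaHom π)
      ≫ inv (F.map (coneKappaHom i π hext))) = 0 := by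
    rw [hι_fact]
    simp only [Category.assoc]
    rw [← Category.assoc, hcomp, Category.assoc, hz, Limits.comp_zero]
  have ex3 : (ShortComplex.mk _ _ w3).Exact := by
    refine ShortComplex.exact_of_iso (ShortComplex.isoMk
      (S₁ := ShortComplex.mk _ _ wE1) (S₂ := ShortComplex.mk _ _ w3) (Iso.refl _)
      ((asIso (F.map (coneKappaHom i π hext))).symm) (Iso.refl _) ?_ ?_) exE1
    · simp
    · show inv (F.map (coneKappaHom i π hext)) ≫ F.map i = F.map (epsHom π) ≫ 𝟙 _
      rw [hi_fact, IsIso.inv_hom_id_assoc, Category.comp_id]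
  have ex2 : (ShortComplex.mk _ _ w2).Exact := by
    refine ShortComplex.exact_of_iso (ShortComplex.isoMk
      (S₁ := ShortComplex.mk _ _ wE2) (S₂ := ShortComplex.mk _ _ w2) (asIso (F.map (RHom D)))
      ((asIso (F.map (coneKappaHom (coneIotaHom π) (epsHom π) (cone_ext π)))).symm)
      ((asIso (F.map (coneKappaHom i π hext))).symm) ?_ ?_) exE2
    · show F.map (RHom D) ≫ F.map (suspHom π) = F.map (coneIotaHom (epsHom π))
        ≫ inv (F.map (coneKappaHom (coneIotaHom π) (epsHom π) (cone_ext π)))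
      rw [hrot]
      simp
    · show inv (F.map (coneKappaHom (coneIotaHom π) (epsHom π) (cone_ext π)))
        ≫ (F.map (coneIotaHom π) ≫ inv (F.map (coneKappaHom i π hext)))
        = F.map (epsHom (epsHom π)) ≫ inv (F.map (coneKappaHom i π hext))
      rw [hι_fact]
      simp
  exact ⟨hκ, w1, w2, w3, w4, ex1, ex2, ex3, ex4⟩
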